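/- arXiv:2206.03114 — 3 statements merged into one kernel-verified Lean document; each statement's English description precedes it below -/
import Mathlib

section
/- Let G be a connected k-uniform hypergraph, let r ≥ 1, and let G' be the hypergraph obtained from G by moving edges (e_1,…,e_r) from (v_1,…,v_r) to a vertex u. Let 0 ≤ α < 1 and let x be the α-Perron vector of G. If x_u ≥ max_{1≤i≤r} x_{v_i}, then ρ_α(G') > ρ_α(G). -/
/-- A (finite) hypergraph on vertex type `V`: a finite set of edges, each a finite
set of vertices.  For the results below the vertex set is the whole type `V`. -/
structure FinHypergraph (V : Type*) where
  edges : Finset (Finset V)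

namespace FinHypergraph

variable {V W : Type*}

/-- `G` is `k`-uniform: every edge has exactly `k` vertices. -/
def Uniform (G : FinHypergraph V) (k : ℕ) : Prop := ∀ e ∈ G.edges, e.card = k

/-- The degree of a vertex: the number of edges containing it. -/
def degree [DecidableEq V] (G : FinHypergraph V) (v : V) : ℕ :=
  (G.edges.filter fun e => v ∈ e).card

/-- A walk of length `l` from `u` to `v`: vertices `vs 0 = u, …, vs l = v` and edges
`es 0, …, es (l-1)` with consecutive vertices lying in the corresponding edge. -/
def Walk (G : FinHypergraph V) (u v : V) (l : ℕ) : Prop :=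
  ∃ (vs : Fin (l + 1) → V) (es : Fin l → Finset V),
    vs 0 = u ∧ vs (Fin.last l) = v ∧
    ∀ i : Fin l, es i ∈ G.edges ∧ vs i.castSucc ∈ es i ∧ vs i.succ ∈ es i

/-- `G` is connected: any two vertices are joined by a walk (equivalently, a path). -/
def Connected (G : FinHypergraph V) : Prop := ∀ u v : V, ∃ l, G.Walk u v l

/-- The distance between two vertices: the minimum length of a walk joining them. -/
noncomputable def hdist (G : FinHypergraph V) (u v : V) : ℕ := sInf {l | G.Walk u v l}

/-- `G` has a cycle: distinct vertices `v_1, …, v_l` and distinct edges `e_1, …, e_l`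
(`l ≥ 2`) with `{v_i, v_{i+1}} ⊆ e_i` (indices mod `l`). -/
def HasCycle (G : FinHypergraph V) : Prop :=
  ∃ (l : ℕ) (hl : 2 ≤ l) (vs : Fin l → V) (es : Fin l → Finset V),
    Function.Injective vs ∧ Function.Injective es ∧
    (∀ i, es i ∈ G.edges) ∧
    ∀ i : Fin l, vs i ∈ es i ∧ vs ⟨((i : ℕ) + 1) % l, Nat.mod_lt _ (by omega)⟩ ∈ es i

/-- A `k`-uniform supertree: a `k`-uniform hypergraph that is connected and acyclic. -/
def IsSupertree (G : FinHypergraph V) (k : ℕ) : Prop :=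
  G.Uniform k ∧ G.Connected ∧ ¬ G.HasCycle

/-- `e` is a pendent edge of `G`: one of its vertices has degree at least `2` and all
its other vertices have degree `1`. -/
def IsPendentEdge [DecidableEq V] (G : FinHypergraph V) (e : Finset V) : Prop :=
  e ∈ G.edges ∧ ∃ v ∈ e, 2 ≤ G.degree v ∧ ∀ w ∈ e, w ≠ v → G.degree w = 1

/-- `S` is an independent set: no two of its vertices lie in a common edge. -/
def IsIndep (G : FinHypergraph V) (S : Finset V) : Prop :=
  ∀ u ∈ S, ∀ v ∈ S, u ≠ v → ∀ e ∈ G.edges, ¬ (u ∈ e ∧ v ∈ e)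

/-- The independence number: the maximum size of an independent set. -/
noncomputable def indepNum (G : FinHypergraph V) : ℕ :=
  sSup {n | ∃ S : Finset V, G.IsIndep S ∧ S.card = n}

/-- `M` is a matching: a set of pairwise disjoint edges of `G`. -/
def IsMatching [DecidableEq V] (G : FinHypergraph V) (M : Finset (Finset V)) : Prop :=
  M ⊆ G.edges ∧ ∀ e ∈ M, ∀ f ∈ M, e ≠ f → e ∩ f = ∅

/-- The matching number: the maximum size of a matching. -/
noncomputable def matchNum [DecidableEq V] (G : FinHypergraph V) : ℕ :=
  sSup {n | ∃ M : Finset (Finset V), G.IsMatching M ∧ M.card = n}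

/-- The `α`-spectral radius of a (connected) `k`-uniform hypergraph:
`ρ_α(G) = max { Σ_{e∈E} ( α Σ_{v∈e} x_v^k + (1-α) k Π_{v∈e} x_v ) :
x ≥ 0, Σ_v x_v^k = 1 }`. -/
noncomputable def aspec [Fintype V] (G : FinHypergraph V) (k : ℕ) (α : ℝ) : ℝ :=
  sSup {r : ℝ | ∃ x : V → ℝ, (∀ v, 0 ≤ x v) ∧ (∑ v, x v ^ k) = 1 ∧
    r = ∑ e ∈ G.edges, (α * ∑ v ∈ e, x v ^ k + (1 - α) * (k : ℝ) * ∏ v ∈ e, x v)}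

/-- `x` is the `α`-Perron vector of `G`: the positive unit maximizer in the
variational characterization of `ρ_α(G)`. -/
def IsPerron [Fintype V] (G : FinHypergraph V) (k : ℕ) (α : ℝ) (x : V → ℝ) : Prop :=
  (∀ v, 0 < x v) ∧ (∑ v, x v ^ k) = 1 ∧
  (∑ e ∈ G.edges, (α * ∑ v ∈ e, x v ^ k + (1 - α) * (k : ℝ) * ∏ v ∈ e, x v)) =
    G.aspec k α

/-- The multiset of vertex degrees of `G` (the degree sequence up to ordering). -/
noncomputable def degreeMultiset [Fintype V] [DecidableEq V] (G : FinHypergraph V) :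
    Multiset ℕ :=
  (Finset.univ : Finset V).val.map G.degree

/-- Isomorphism of hypergraphs: a bijection of the vertex sets carrying edges to
edges. -/
def Iso [DecidableEq W] (G : FinHypergraph V) (H : FinHypergraph W) : Prop :=
  ∃ φ : V ≃ W, ∀ e : Finset V, e ∈ G.edges ↔ e.image φ ∈ H.edges

end FinHypergraph
set_option linter.unusedSectionVars false

section Aux
variable {V : Type} [Fintype V] [DecidableEq V]

noncomputable def TFaux (k : ℕ) (α : ℝ) (f : Finset V) (x : V → ℝ) : ℝ :=
  α * ∑ v ∈ f, x v ^ k + (1 - α) * (k : ℝ) * ∏ v ∈ f, x v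

noncomputable def PFaux (k : ℕ) (α : ℝ) (E : Finset (Finset V)) (x : V → ℝ) : ℝ :=
  ∑ f ∈ E, TFaux k α f x

lemma TFaux_congr {k α} {f : Finset V} {x y : V → ℝ} (h : ∀ w ∈ f, y w = x w) :
    TFaux k α f y = TFaux k α f x := by
  unfold TFaux
  rw [Finset.sum_congr rfl fun w hw => by rw [h w hw],
      Finset.prod_congr rfl fun w hw => by rw [h w hw]]

lemma TFaux_insert {k : ℕ} {α : ℝ} {u : V} {D : Finset V} (hu : u ∉ D) (x : V → ℝ) :
    TFaux k α (insert u D) x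
      = α * (x u ^ k + ∑ w ∈ D, x w ^ k) + (1 - α) * k * (x u * ∏ w ∈ D, x w) := by
  unfold TFaux
  rw [Finset.sum_insert hu, Finset.prod_insert hu]

lemma TFaux_mem {k : ℕ} {α : ℝ} {u : V} {f : Finset V} (hu : u ∈ f) (x : V → ℝ) :
    TFaux k α f x
      = α * (x u ^ k + ∑ w ∈ f.erase u, x w ^ k)
        + (1 - α) * k * (x u * ∏ w ∈ f.erase u, x w) := by
  unfold TFaux
  rw [← Finset.add_sum_erase f _ hu, ← Finset.mul_prod_erase f _ hu]

lemma TFaux_update_mem {k : ℕ} {α : ℝ} {u : V} {f : Finset V} (hu : u ∈ f)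
    (x : V → ℝ) (s : ℝ) :
    TFaux k α f (Function.update x u s)
      = TFaux k α f x + α * (s ^ k - x u ^ k)
        + (1 - α) * k * (s - x u) * ∏ w ∈ f.erase u, x w := by
  have hy : ∀ w ∈ f.erase u, Function.update x u s w = x w := fun w hw =>
    Function.update_of_ne (Finset.ne_of_mem_erase hw) _ _
  rw [TFaux_mem hu (Function.update x u s), TFaux_mem hu x,
      Function.update_self,
      Finset.sum_congr rfl fun w hw => by rw [hy w hw],
      Finset.prod_congr rfl fun w hw => by rw [hy w hw]]
  ring

lemma PFaux_update (k : ℕ) (α : ℝ) (E : Finset (Finset V)) (x : V → ℝ) (u : V) (s : ℝ) :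
    PFaux k α E (Function.update x u s)
      = PFaux k α E x
        + ((E.filter fun f => u ∈ f).card : ℝ) * (α * (s ^ k - x u ^ k))
        + (1 - α) * k * (s - x u) *
            ∑ f ∈ E.filter (fun f => u ∈ f), ∏ w ∈ f.erase u, x w := by
  unfold PFaux
  rw [← Finset.sum_filter_add_sum_filter_not E (fun f => u ∈ f)
        (fun f => TFaux k α f (Function.update x u s)),
      ← Finset.sum_filter_add_sum_filter_not E (fun f => u ∈ f) (fun f => TFaux k α f x)]
  have h1 : ∑ f ∈ E.filter (fun f => u ∈ f), TFaux k α f (Function.update x u s)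
      = ∑ f ∈ E.filter (fun f => u ∈ f),
          (TFaux k α f x + α * (s ^ k - x u ^ k)
            + (1 - α) * k * (s - x u) * ∏ w ∈ f.erase u, x w) := by
    refine Finset.sum_congr rfl fun f hf => ?_
    exact TFaux_update_mem (Finset.mem_filter.mp hf).2 x s
  have h2 : ∑ f ∈ E.filter (fun f => ¬ u ∈ f), TFaux k α f (Function.update x u s)
      = ∑ f ∈ E.filter (fun f => ¬ u ∈ f), TFaux k α f x := by
    refine Finset.sum_congr rfl fun f hf => ?_
    exact TFaux_congr fun w hw =>
      Function.update_of_ne (fun h => (Finset.mem_filter.mp hf).2 (by rwa [h] at hw)) _ _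
  rw [h1, h2, Finset.sum_add_distrib, Finset.sum_add_distrib, Finset.sum_const,
      ← Finset.mul_sum]
  ring

lemma aspec_eq_PFaux (G : FinHypergraph V) (k : ℕ) (α : ℝ) :
    G.aspec k α = sSup {r : ℝ | ∃ x : V → ℝ, (∀ v, 0 ≤ x v) ∧ (∑ v, x v ^ k) = 1 ∧
      r = PFaux k α G.edges x} := rfl

lemma bddAux (k : ℕ) (hk : k ≠ 0) (α : ℝ) (hα0 : 0 ≤ α) (hα1 : α ≤ 1)
    (E : Finset (Finset V)) :
    BddAbove {r : ℝ | ∃ x : V → ℝ, (∀ v, 0 ≤ x v) ∧ (∑ v, x v ^ k) = 1 ∧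
      r = PFaux k α E x} := by
  refine ⟨E.card * (α + (1 - α) * k), ?_⟩
  rintro r ⟨x, hx0, hx1, rfl⟩
  have hxk1 : ∀ v : V, x v ^ k ≤ 1 := by
    intro v
    calc x v ^ k ≤ ∑ w, x w ^ k :=
          Finset.single_le_sum (fun w _ => pow_nonneg (hx0 w) k) (Finset.mem_univ v)
      _ = 1 := hx1
  have hx1' : ∀ v : V, x v ≤ 1 := fun v => (pow_le_one_iff_of_nonneg (hx0 v) hk).mp (hxk1 v)
  have hterm : ∀ f ∈ E, TFaux k α f x ≤ α + (1 - α) * k := by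
    intro f _
    unfold TFaux
    have hsum : ∑ v ∈ f, x v ^ k ≤ 1 := by
      calc ∑ v ∈ f, x v ^ k ≤ ∑ v : V, x v ^ k :=
            Finset.sum_le_sum_of_subset_of_nonneg (Finset.subset_univ f)
              (fun w _ _ => pow_nonneg (hx0 w) k)
        _ = 1 := hx1
    have hprod : ∏ v ∈ f, x v ≤ 1 :=
      Finset.prod_le_one (fun v _ => hx0 v) (fun v _ => hx1' v)
    have h1 : α * ∑ v ∈ f, x v ^ k ≤ α * 1 := mul_le_mul_of_nonneg_left hsum hα0
    have h2 : (1 - α) * k * ∏ v ∈ f, x v ≤ (1 - α) * k * 1 :=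
      mul_le_mul_of_nonneg_left hprod (mul_nonneg (by linarith) (Nat.cast_nonneg k))
    linarith
  calc PFaux k α E x ≤ ∑ _f ∈ E, (α + (1 - α) * k) := Finset.sum_le_sum hterm
    _ = E.card * (α + (1 - α) * k) := by rw [Finset.sum_const, nsmul_eq_mul]

lemma pf_le_aspec (k : ℕ) (hk : k ≠ 0) (α : ℝ) (hα0 : 0 ≤ α) (hα1 : α ≤ 1)
    (G : FinHypergraph V) (hGu : G.Uniform k) (y : V → ℝ) (hy : ∀ v, 0 ≤ y v)
    (hs : 0 < ∑ v, y v ^ k) :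
    PFaux k α G.edges y ≤ (∑ v, y v ^ k) * G.aspec k α := by
  set s : ℝ := ∑ v, y v ^ k with hsdef
  set c : ℝ := (s⁻¹) ^ ((k : ℝ)⁻¹) with hcdef
  have hc0 : 0 ≤ c := Real.rpow_nonneg (inv_nonneg.mpr hs.le) _
  have hck : c ^ k = s⁻¹ := Real.rpow_inv_natCast_pow (inv_nonneg.mpr hs.le) hk
  have hz0 : ∀ v, 0 ≤ c * y v := fun v => mul_nonneg hc0 (hy v)
  have hznorm : (∑ v, (c * y v) ^ k) = 1 := by
    simp only [mul_pow, ← Finset.mul_sum]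
    rw [hck, ← hsdef, inv_mul_cancel₀ hs.ne']
  have hPz : PFaux k α G.edges (fun v => c * y v) = c ^ k * PFaux k α G.edges y := by
    unfold PFaux TFaux
    rw [Finset.mul_sum]
    refine Finset.sum_congr rfl fun f hf => ?_
    have hp : ∏ v ∈ f, (c * y v) = c ^ f.card * ∏ v ∈ f, y v := by
      rw [Finset.prod_mul_distrib, Finset.prod_const]
    simp only [mul_pow, ← Finset.mul_sum]
    rw [hp, hGu f hf]
    ring
  have hmem : c ^ k * PFaux k α G.edges y ∈ {r : ℝ | ∃ x : V → ℝ, (∀ v, 0 ≤ x v) ∧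
      (∑ v, x v ^ k) = 1 ∧ r = PFaux k α G.edges x} :=
    ⟨fun v => c * y v, hz0, hznorm, hPz.symm⟩
  have hle := le_csSup (bddAux k hk α hα0 hα1 G.edges) hmem
  rw [← aspec_eq_PFaux] at hle
  rw [hck] at hle
  calc PFaux k α G.edges y = s * (s⁻¹ * PFaux k α G.edges y) := by field_simp
    _ ≤ s * G.aspec k α := mul_le_mul_of_nonneg_left hle hs.le

end Aux


/-- edge-moving lemma: if `G'` is obtained from the connected
`k`-uniform hypergraph `G` by moving edges `(e_1,…,e_r)` from `(v_1,…,v_r)` to `u`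
and the `α`-Perron vector `x` of `G` satisfies `x_u ≥ max_i x_{v_i}`, then
`ρ_α(G') > ρ_α(G)`. -/
theorem aspec_lt_of_edge_moving (k : ℕ) (hk : 2 ≤ k)
    {V : Type} [Fintype V] [DecidableEq V] (G G' : FinHypergraph V)
    (hGu : G.Uniform k) (hGc : G.Connected)
    (r : ℕ) (hr : 1 ≤ r) (u : V) (v : Fin r → V) (e : Fin r → Finset V)
    (he : ∀ i, e i ∈ G.edges) (heinj : Function.Injective e)
    (hue : ∀ i, u ∉ e i) (hve : ∀ i, v i ∈ e i)
    (he'inj : Function.Injective fun i => insert u ((e i).erase (v i)))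
    (he'new : ∀ i, insert u ((e i).erase (v i)) ∉ G.edges)
    (hG' : G'.edges =
      (G.edges \ Finset.image e Finset.univ) ∪
        Finset.image (fun i => insert u ((e i).erase (v i))) Finset.univ)
    (α : ℝ) (hα0 : 0 ≤ α) (hα1 : α < 1)
    (x : V → ℝ) (hx : G.IsPerron k α x)
    (hxu : ∀ i, x (v i) ≤ x u) :
    G.aspec k α < G'.aspec k α := by
  by_contra hcon
  push_neg at hcon
  obtain ⟨hxpos, hxnorm, hxval⟩ := hx
  have hk0 : k ≠ 0 := by omega
  have h1α : (0:ℝ) < 1 - α := by linarith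
  have hkR : (0:ℝ) < (k:ℝ) := by exact_mod_cast Nat.pos_of_ne_zero hk0
  set ρ : ℝ := G.aspec k α with hρdef
  have hPx : PFaux k α G.edges x = ρ := hxval
  have huD : ∀ i, u ∉ (e i).erase (v i) := fun i h => hue i (Finset.mem_of_mem_erase h)
  -- uniformity of G'
  have hG'u : G'.Uniform k := by
    intro f hf
    rw [hG'] at hf
    rcases Finset.mem_union.mp hf with h | h
    · exact hGu f (Finset.mem_sdiff.mp h).1
    · obtain ⟨i, _, rfl⟩ := Finset.mem_image.mp h
      rw [Finset.card_insert_of_notMem (huD i), Finset.card_erase_of_mem (hve i),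
        hGu _ (he i)]
      omega
  -- decomposition of sums over the edges of G'
  have hsub : Finset.image e Finset.univ ⊆ G.edges := by
    intro f hf
    obtain ⟨i, _, rfl⟩ := Finset.mem_image.mp hf
    exact he i
  have hdisj : Disjoint (G.edges \ Finset.image e Finset.univ)
      (Finset.image (fun i => insert u ((e i).erase (v i))) Finset.univ) := by
    rw [Finset.disjoint_right]
    intro f hf hf2
    obtain ⟨i, _, rfl⟩ := Finset.mem_image.mp hf
    exact he'new i (Finset.mem_sdiff.mp hf2).1
  have decomp : ∀ F : Finset V → ℝ,
      ∑ f ∈ G'.edges, F f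
        = ∑ f ∈ G.edges, F f - ∑ i, F (e i)
          + ∑ i, F (insert u ((e i).erase (v i))) := by
    intro F
    rw [hG', Finset.sum_union hdisj, Finset.sum_sdiff_eq_sub hsub,
        Finset.sum_image (fun a _ b _ h => heinj h),
        Finset.sum_image (fun a _ b _ h => he'inj h)]
  -- abbreviations
  set d : ℝ := ((G.edges.filter fun f => u ∈ f).card : ℝ) with hddef
  set S : ℝ := ∑ f ∈ G.edges.filter (fun f => u ∈ f), ∏ w ∈ f.erase u, x w with hSdef
  set C : ℝ := ∑ i : Fin r, ∏ w ∈ (e i).erase (v i), x w with hCdef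
  set Δ : ℝ := ∑ i : Fin r,
    (TFaux k α (insert u ((e i).erase (v i))) x - TFaux k α (e i) x) with hΔdef
  have hxu0 : 0 < x u := hxpos u
  have hxuk : x u ^ k ≤ 1 := by
    calc x u ^ k ≤ ∑ w, x w ^ k :=
          Finset.single_le_sum (fun w _ => pow_nonneg (hxpos w).le k) (Finset.mem_univ u)
      _ = 1 := hxnorm
  have hC : 0 < C := by
    rw [hCdef]
    refine Finset.sum_pos (fun i _ => Finset.prod_pos fun w _ => hxpos w) ?_
    exact ⟨⟨0, hr⟩, Finset.mem_univ _⟩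
  have hΔ0 : 0 ≤ Δ := by
    rw [hΔdef]
    refine Finset.sum_nonneg fun i _ => ?_
    rw [TFaux_insert (huD i) x, TFaux_mem (hve i) x]
    have h1 : x (v i) ^ k ≤ x u ^ k := pow_le_pow_left₀ (hxpos (v i)).le (hxu i) k
    have h2 : (0:ℝ) ≤ ∏ w ∈ (e i).erase (v i), x w :=
      Finset.prod_nonneg fun w _ => (hxpos w).le
    have h3 : 0 ≤ α * (x u ^ k - x (v i) ^ k) := mul_nonneg hα0 (by linarith)
    have h4 : 0 ≤ (1 - α) * (k:ℝ) * ((x u - x (v i)) * ∏ w ∈ (e i).erase (v i), x w) :=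
      mul_nonneg (mul_nonneg h1α.le hkR.le) (mul_nonneg (by linarith [hxu i]) h2)
    nlinarith [h3, h4]
  -- norm of updated vector
  have hnorm : ∀ s : ℝ, (∑ w, (Function.update x u s) w ^ k) = 1 - x u ^ k + s ^ k := by
    intro s
    have h1 : ∀ w, (Function.update x u s) w ^ k
        = Function.update (fun w => x w ^ k) u (s ^ k) w := by
      intro w
      by_cases h : w = u
      · subst h; simp
      · simp [Function.update_of_ne h]
    rw [Finset.sum_congr rfl fun w _ => h1 w,
        Finset.sum_update_of_mem (Finset.mem_univ u)]
    have h2 : x u ^ k + ∑ w ∈ Finset.univ.erase u, x w ^ k = 1 := by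
      rw [← hxnorm]
      exact Finset.add_sum_erase _ (fun w => x w ^ k) (Finset.mem_univ u)
    rw [Finset.sdiff_singleton_eq_erase]
    linarith
  have hupd0 : ∀ s : ℝ, 0 < s → ∀ w, 0 ≤ Function.update x u s w := by
    intro s hs w
    by_cases h : w = u
    · subst h; rw [Function.update_self]; exact hs.le
    · rw [Function.update_of_ne h]; exact (hxpos w).le
  have hSpos : ∀ s : ℝ, 0 < s → 0 < 1 - x u ^ k + s ^ k := by
    intro s hs
    have := pow_pos hs k
    linarith
  -- key upper bounds from the sSup characterization
  have hGkey : ∀ s : ℝ, 0 < s →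
      PFaux k α G.edges (Function.update x u s) ≤ (1 - x u ^ k + s ^ k) * ρ := by
    intro s hs
    have h := pf_le_aspec k hk0 α hα0 hα1.le G hGu (Function.update x u s) (hupd0 s hs)
      (by rw [hnorm s]; exact hSpos s hs)
    rwa [hnorm s] at h
  have hG'key : ∀ s : ℝ, 0 < s →
      PFaux k α G'.edges (Function.update x u s) ≤ (1 - x u ^ k + s ^ k) * ρ := by
    intro s hs
    have h := pf_le_aspec k hk0 α hα0 hα1.le G' hG'u (Function.update x u s) (hupd0 s hs)
      (by rw [hnorm s]; exact hSpos s hs)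
    rw [hnorm s] at h
    calc PFaux k α G'.edges (Function.update x u s)
        ≤ (1 - x u ^ k + s ^ k) * G'.aspec k α := h
      _ ≤ (1 - x u ^ k + s ^ k) * ρ :=
          mul_le_mul_of_nonneg_left hcon (hSpos s hs).le
  -- identities for the updated vector
  have identity1 : ∀ s : ℝ,
      PFaux k α G.edges (Function.update x u s)
        = ρ + d * (α * (s ^ k - x u ^ k)) + (1 - α) * k * (s - x u) * S := by
    intro s
    rw [PFaux_update, hPx, hddef, hSdef]
  have identity2 : ∀ s : ℝ,
      PFaux k α G'.edges (Function.update x u s)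
        = ρ + Δ + (d + (r:ℝ)) * (α * (s ^ k - x u ^ k))
          + (1 - α) * k * (s - x u) * (S + C) := by
    intro s
    have hd2 := decomp (fun f => TFaux k α f (Function.update x u s))
    beta_reduce at hd2
    have hA : ∀ i, TFaux k α (e i) (Function.update x u s) = TFaux k α (e i) x :=
      fun i => TFaux_congr fun w hw =>
        Function.update_of_ne (fun h => hue i (by rwa [h] at hw)) _ _
    have hB : ∀ i, TFaux k α (insert u ((e i).erase (v i))) (Function.update x u s)
        = TFaux k α (insert u ((e i).erase (v i))) x + α * (s ^ k - x u ^ k)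
          + (1 - α) * k * (s - x u) * ∏ w ∈ (e i).erase (v i), x w := by
      intro i
      rw [TFaux_update_mem (Finset.mem_insert_self u _) x s,
          Finset.erase_insert (huD i)]
    have hfirst : (∑ f ∈ G.edges, TFaux k α f (Function.update x u s))
        = PFaux k α G.edges (Function.update x u s) := rfl
    have hPF' : PFaux k α G'.edges (Function.update x u s)
        = ∑ f ∈ G'.edges, TFaux k α f (Function.update x u s) := rfl
    rw [hPF', hd2, hfirst, identity1 s,
        Finset.sum_congr rfl fun i _ => hA i,
        Finset.sum_congr rfl fun i _ => hB i,
        Finset.sum_add_distrib, Finset.sum_add_distrib, Finset.sum_const,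
        Finset.card_univ, Fintype.card_fin, nsmul_eq_mul, ← Finset.mul_sum,
        ← hCdef]
    have hΔeq : Δ = (∑ i, TFaux k α (insert u ((e i).erase (v i))) x)
        - ∑ i, TFaux k α (e i) x := by
      rw [hΔdef, Finset.sum_sub_distrib]
    rw [hΔeq]
    ring
  -- raw polynomial inequalities
  have rawG : ∀ s : ℝ, 0 < s →
      d * (α * (s ^ k - x u ^ k)) + (1 - α) * k * (s - x u) * S
        ≤ (s ^ k - x u ^ k) * ρ := by
    intro s hs
    have h1 := hGkey s hs
    rw [identity1 s] at h1
    have h2 : (1 - x u ^ k + s ^ k) * ρ = ρ + (s ^ k - x u ^ k) * ρ := by ring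
    linarith
  have rawG' : ∀ s : ℝ, 0 < s →
      (d + (r:ℝ)) * (α * (s ^ k - x u ^ k)) + (1 - α) * k * (s - x u) * (S + C)
        ≤ (s ^ k - x u ^ k) * ρ := by
    intro s hs
    have h1 := hG'key s hs
    rw [identity2 s] at h1
    have h2 : (1 - x u ^ k + s ^ k) * ρ = ρ + (s ^ k - x u ^ k) * ρ := by ring
    linarith
  -- divide by (s - x u)
  set q : ℝ → ℝ := fun s => ∑ i ∈ Finset.range k, s ^ i * x u ^ (k - 1 - i) with hqdef
  have hq : ∀ s : ℝ, q s * (s - x u) = s ^ k - x u ^ k := fun s => geom_sum₂_mul s (x u) k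
  have divA : ∀ s : ℝ, x u < s →
      (d + (r:ℝ)) * (α * q s) + (1 - α) * k * (S + C) ≤ q s * ρ := by
    intro s hs
    have hs0 : 0 < s := lt_trans hxu0 hs
    have h := rawG' s hs0
    rw [← hq s] at h
    have hpos : 0 < s - x u := sub_pos.mpr hs
    refine le_of_mul_le_mul_right ?_ hpos
    calc ((d + (r:ℝ)) * (α * q s) + (1 - α) * k * (S + C)) * (s - x u)
        = (d + (r:ℝ)) * (α * (q s * (s - x u)))
            + (1 - α) * k * (s - x u) * (S + C) := by ring
      _ ≤ (q s * (s - x u)) * ρ := h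
      _ = q s * ρ * (s - x u) := by ring
  have divB : ∀ s : ℝ, 0 < s → s < x u →
      q s * ρ ≤ d * (α * q s) + (1 - α) * k * S := by
    intro s hs0 hs
    have h := rawG s hs0
    rw [← hq s] at h
    have hpos : 0 < x u - s := sub_pos.mpr hs
    refine le_of_mul_le_mul_right ?_ hpos
    calc q s * ρ * (x u - s) = -((q s * (s - x u)) * ρ) := by ring
      _ ≤ -(d * (α * (q s * (s - x u))) + (1 - α) * k * (s - x u) * S) := neg_le_neg h
      _ = (d * (α * q s) + (1 - α) * k * S) * (x u - s) := by ring
  -- limits as s → x u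
  have hcont : Continuous q := by
    rw [hqdef]
    exact continuous_finset_sum _ fun i _ => (continuous_pow i).mul continuous_const
  have limA : (d + (r:ℝ)) * (α * q (x u)) + (1 - α) * k * (S + C) ≤ q (x u) * ρ := by
    have c1 : Continuous fun s => q s * ρ - ((d + (r:ℝ)) * (α * q s)
        + (1 - α) * k * (S + C)) :=
      (hcont.mul continuous_const).sub
        ((continuous_const.mul (continuous_const.mul hcont)).add continuous_const)
    have ht := (c1.tendsto (x u)).mono_left (nhdsWithin_le_nhds (s := Set.Ioi (x u)))
    have h0 : (0:ℝ) ≤ q (x u) * ρ - ((d + (r:ℝ)) * (α * q (x u))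
        + (1 - α) * k * (S + C)) := by
      refine ge_of_tendsto ht ?_
      filter_upwards [self_mem_nhdsWithin] with s hs
      have := divA s hs
      linarith
    linarith
  have limB : q (x u) * ρ ≤ d * (α * q (x u)) + (1 - α) * k * S := by
    have c1 : Continuous fun s => (d * (α * q s) + (1 - α) * k * S) - q s * ρ :=
      ((continuous_const.mul (continuous_const.mul hcont)).add continuous_const).sub
        (hcont.mul continuous_const)
    have ht := (c1.tendsto (x u)).mono_left (nhdsWithin_le_nhds (s := Set.Iio (x u)))
    have h0 : (0:ℝ) ≤ (d * (α * q (x u)) + (1 - α) * k * S) - q (x u) * ρ := by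
      refine ge_of_tendsto ht ?_
      filter_upwards [self_mem_nhdsWithin,
        eventually_nhdsWithin_of_eventually_nhds (eventually_gt_nhds hxu0)]
        with s hs hs0
      have := divB s hs0 hs
      linarith
    linarith
  -- final contradiction
  have hqx : q (x u) = (k:ℝ) * x u ^ (k - 1) := by
    have h1 : ∀ i ∈ Finset.range k, x u ^ i * x u ^ (k - 1 - i) = x u ^ (k - 1) := by
      intro i hi
      rw [← pow_add]
      congr 1
      have := Finset.mem_range.mp hi
      omega
    rw [hqdef]
    beta_reduce
    rw [Finset.sum_congr rfl h1, Finset.sum_const, Finset.card_range, nsmul_eq_mul]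
  have hQ : 0 < q (x u) := by
    rw [hqx]
    exact mul_pos hkR (pow_pos hxu0 _)
  have e1 : (d + (r:ℝ)) * (α * q (x u))
      = d * (α * q (x u)) + α * q (x u) * (r:ℝ) := by ring
  have e2 : (1 - α) * (k:ℝ) * (S + C) = (1 - α) * k * S + (1 - α) * k * C := by ring
  have h4 : 0 < (1 - α) * (k:ℝ) * C := mul_pos (mul_pos h1α hkR) hC
  have h5 : 0 ≤ α * q (x u) * (r:ℝ) :=
    mul_nonneg (mul_nonneg hα0 hQ.le) (Nat.cast_nonneg r)
  have hr1 : (1:ℝ) ≤ (r:ℝ) := by exact_mod_cast hr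
  linarith
end

section
/- Every k-uniform supertree G has a maximum independent set S such that for each pendent edge of G, S contains a pendent vertex of that edge. -/
/-- every `k`-uniform supertree has a maximum independent set
containing a pendent vertex of each pendent edge. -/
theorem exists_maxIndep_with_pendent_vertices (k : ℕ) (hk : 2 ≤ k)
    {V : Type} [Fintype V] [DecidableEq V] (G : FinHypergraph V)
    (hG : G.IsSupertree k) :
    ∃ S : Finset V, G.IsIndep S ∧ S.card = G.indepNum ∧
      ∀ e : Finset V, G.IsPendentEdge e → ∃ v ∈ S, v ∈ e ∧ G.degree v = 1 := by
  
  classical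
  obtain ⟨hUnif, -, -⟩ := hG
  -- boundedness of the defining set of the independence number
  have hbdd : BddAbove {n | ∃ S : Finset V, G.IsIndep S ∧ S.card = n} := by
    refine ⟨Fintype.card V, ?_⟩
    rintro n ⟨S, -, rfl⟩
    simpa using S.card_le_univ
  have hle : ∀ S : Finset V, G.IsIndep S → S.card ≤ G.indepNum := fun S hS =>
    le_csSup hbdd ⟨S, hS, rfl⟩
  -- a degree-one vertex lies in a unique edge
  have huniq : ∀ w : V, G.degree w = 1 → ∀ e ∈ G.edges, w ∈ e → ∀ f ∈ G.edges, w ∈ f → e = f := by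
    intro w hw e he hwe f hf hwf
    have h1 : (G.edges.filter fun e => w ∈ e).card ≤ 1 := hw.le
    exact Finset.card_le_one.mp h1 e (Finset.mem_filter.mpr ⟨he, hwe⟩)
      f (Finset.mem_filter.mpr ⟨hf, hwf⟩)
  -- each pendent edge contains a degree-one vertex
  have hpend : ∀ e : Finset V, G.IsPendentEdge e →
      ∃ v ∈ e, 2 ≤ G.degree v ∧ (∀ w ∈ e, w ≠ v → G.degree w = 1) ∧
        ∃ w ∈ e, w ≠ v := by
    rintro e ⟨he, v, hv, hdv, hall⟩
    have hcard : e.card = k := hUnif e he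
    have h1 : 1 < e.card := by omega
    obtain ⟨w, hw, hwv⟩ := Finset.exists_mem_ne h1 v
    exact ⟨v, hv, hdv, hall, w, hw, hwv⟩
  -- a maximum independent set meets every pendent edge
  have hmeet : ∀ S : Finset V, G.IsIndep S → S.card = G.indepNum →
      ∀ e : Finset V, G.IsPendentEdge e → ∃ u ∈ S, u ∈ e := by
    intro S hS hcard e hpe
    by_contra h
    push_neg at h
    obtain ⟨v, hv, hdv, hall, w, hwe, hwv⟩ := hpend e hpe
    have hw1 : G.degree w = 1 := hall w hwe hwv
    have hwS : w ∉ S := fun hws => h w hws hwe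
    have hindep : G.IsIndep (insert w S) := by
      intro a ha b hb hab f hf habf
      obtain ⟨haf, hbf⟩ := habf
      rcases Finset.mem_insert.mp ha with rfl | haS
      · rcases Finset.mem_insert.mp hb with rfl | hbS
        · exact hab rfl
        · have hfe : f = e := huniq a hw1 f hf haf e hpe.1 hwe
          exact h b hbS (hfe ▸ hbf)
      · rcases Finset.mem_insert.mp hb with rfl | hbS
        · have hfe : f = e := huniq b hw1 f hf hbf e hpe.1 hwe
          exact h a haS (hfe ▸ haf)
        · exact hS a haS b hbS hab f hf ⟨haf, hbf⟩
    have := hle _ hindep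
    rw [Finset.card_insert_of_notMem hwS] at this
    omega
  -- the set of "bad" pendent edges relative to S
  set bad : Finset V → Finset (Finset V) := fun S =>
    G.edges.filter fun e => G.IsPendentEdge e ∧ ∀ v ∈ S, v ∈ e → G.degree v ≠ 1
    with hbaddef
  have hdone : ∀ S : Finset V, G.IsIndep S → S.card = G.indepNum → bad S = ∅ →
      ∃ S' : Finset V, G.IsIndep S' ∧ S'.card = G.indepNum ∧
        ∀ e : Finset V, G.IsPendentEdge e → ∃ v ∈ S', v ∈ e ∧ G.degree v = 1 := by
    intro S hS hcard hb
    refine ⟨S, hS, hcard, ?_⟩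
    intro e hpe
    by_contra h
    push_neg at h
    have hmem : e ∈ bad S := by
      rw [hbaddef]
      exact Finset.mem_filter.mpr ⟨hpe.1, hpe, fun v hv hve => h v hv hve⟩
    rw [hb] at hmem
    exact absurd hmem (Finset.notMem_empty e)
  have key : ∀ n (S : Finset V), G.IsIndep S → S.card = G.indepNum → (bad S).card ≤ n →
      ∃ S' : Finset V, G.IsIndep S' ∧ S'.card = G.indepNum ∧
        ∀ e : Finset V, G.IsPendentEdge e → ∃ v ∈ S', v ∈ e ∧ G.degree v = 1 := by
    intro n
    induction n with
    | zero =>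
      intro S hS hcard hb
      exact hdone S hS hcard (Finset.card_eq_zero.mp (Nat.le_zero.mp hb))
    | succ n ih =>
      intro S hS hcard hb
      by_cases hbe : bad S = ∅
      · exact hdone S hS hcard hbe
      · obtain ⟨e, he⟩ := Finset.nonempty_iff_ne_empty.mpr hbe
        have he' := he
        rw [hbaddef] at he'
        obtain ⟨heE, hpe, hbadv⟩ := Finset.mem_filter.mp he'
        obtain ⟨v, hve, hdv, hall, w, hwe, hwv⟩ := hpend e hpe
        have hw1 : G.degree w = 1 := hall w hwe hwv
        -- the unique vertex of S in e is v
        obtain ⟨u, huS, hue⟩ := hmeet S hS hcard e hpe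
        have huv : u = v := by
          by_contra hne
          exact hbadv u huS hue (hall u hue hne)
        subst huv
        have hwS : w ∉ S := fun hws => hbadv w hws hwe hw1
        set S' : Finset V := insert w (S.erase u) with hS'def
        have hwS' : w ∈ S' := Finset.mem_insert_self _ _
        -- independence of S'
        have hindep : G.IsIndep S' := by
          intro a ha b hb' hab f hf habf
          obtain ⟨haf, hbf⟩ := habf
          rcases Finset.mem_insert.mp ha with rfl | haS
          · rcases Finset.mem_insert.mp hb' with rfl | hbS
            · exact hab rfl
            · have hfe : f = e := huniq a hw1 f hf haf e heE hwe
              have hbS' : b ∈ S := Finset.mem_of_mem_erase hbS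
              have hbu : b ≠ u := Finset.ne_of_mem_erase hbS
              exact hS b hbS' u huS hbu e heE ⟨hfe ▸ hbf, hue⟩
          · rcases Finset.mem_insert.mp hb' with rfl | hbS
            · have hfe : f = e := huniq b hw1 f hf hbf e heE hwe
              have haS' : a ∈ S := Finset.mem_of_mem_erase haS
              have hau : a ≠ u := Finset.ne_of_mem_erase haS
              exact hS a haS' u huS hau e heE ⟨hfe ▸ haf, hue⟩
            · exact hS a (Finset.mem_of_mem_erase haS) b (Finset.mem_of_mem_erase hbS)
                hab f hf ⟨haf, hbf⟩
        -- cardinality is preserved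
        have hwne : w ∉ S.erase u := fun hw => hwS (Finset.mem_of_mem_erase hw)
        have hcard' : S'.card = G.indepNum := by
          rw [hS'def, Finset.card_insert_of_notMem hwne, Finset.card_erase_of_mem huS]
          have hpos : 1 ≤ S.card := Finset.card_pos.mpr ⟨u, huS⟩
          omega
        -- bad set shrinks
        have hsub : bad S' ⊆ (bad S).erase e := by
          intro f hf
          rw [hbaddef] at hf
          obtain ⟨hfE, hpf, hbad'⟩ := Finset.mem_filter.mp hf
          have hfe : f ≠ e := by
            intro h; subst h
            exact hbad' w hwS' hwe hw1
          refine Finset.mem_erase.mpr ⟨hfe, ?_⟩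
          rw [hbaddef]
          refine Finset.mem_filter.mpr ⟨hfE, hpf, ?_⟩
          intro x hxS hxf hx1
          have hxu : x ≠ u := by
            intro h; subst h
            omega
          exact hbad' x (Finset.mem_insert_of_mem (Finset.mem_erase.mpr ⟨hxu, hxS⟩)) hxf hx1
        have hcards : (bad S').card ≤ n := by
          have h1 := Finset.card_le_card hsub
          have h2 : ((bad S).erase e).card = (bad S).card - 1 :=
            Finset.card_erase_of_mem he
          have h3 : 1 ≤ (bad S).card := Finset.card_pos.mpr ⟨e, he⟩
          omega
        exact ih S' hindep hcard' hcards
  obtain ⟨S, hS, hcard⟩ :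
      G.indepNum ∈ {n | ∃ S : Finset V, G.IsIndep S ∧ S.card = n} := by
    apply Nat.sSup_mem _ hbdd
    exact ⟨0, ∅, fun u hu => by simp at hu, Finset.card_empty⟩
  exact key (bad S).card S hS hcard le_rfl
end

section
/- Let 0 ≤ α < 1, let π be a non-increasing degree sequence of some k-uniform supertree, let G be a supertree attaining the maximum α-spectral radius in 𝕋_π, and let x be the α-Perron vector of G. Then for all vertices u, v ∈ V(G), if d_G(u) > d_G(v), then x_u > x_v. -/
namespace FinHypergraph

variable {V : Type*}

/-- ℕ-indexed reformulation of `Walk`. -/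
def NWalk (G : FinHypergraph V) (u v : V) (l : ℕ) : Prop :=
  ∃ (vs : ℕ → V) (es : ℕ → Finset V), vs 0 = u ∧ vs l = v ∧
    ∀ i < l, es i ∈ G.edges ∧ vs i ∈ es i ∧ vs (i + 1) ∈ es i

theorem walk_iff_nwalk {G : FinHypergraph V} {u v : V} {l : ℕ} :
    G.Walk u v l ↔ G.NWalk u v l := by
  constructor
  · rintro ⟨vs, es, h0, hl, hstep⟩
    refine ⟨fun n => vs ⟨min n l, by omega⟩, fun n => if h : n < l then es ⟨n, h⟩ else ∅,
      ?_, ?_, ?_⟩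
    · simpa using h0
    · simp; exact hl
    · intro i hi
      obtain ⟨he, h1, h2⟩ := hstep ⟨i, hi⟩
      refine ⟨by simp [hi, he], ?_, ?_⟩
      · convert h1 using 2
        · simp [hi]
        · ext; simp [Fin.castSucc]; omega
      · convert h2 using 2
        · simp [hi]
        · ext; simp [Fin.succ]; omega
  · rintro ⟨vs, es, h0, hl, hstep⟩
    refine ⟨fun i => vs i.val, fun i => es i.val, by simpa using h0, by simpa using hl, ?_⟩
    intro i
    obtain ⟨he, h1, h2⟩ := hstep i.val i.isLt
    exact ⟨he, by simpa using h1, by simpa using h2⟩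

/-- Reachability. -/
def Reach (G : FinHypergraph V) (u v : V) : Prop := ∃ l, G.NWalk u v l

theorem nwalk_refl (G : FinHypergraph V) (u : V) : G.NWalk u u 0 :=
  ⟨fun _ => u, fun _ => ∅, rfl, rfl, by omega⟩

theorem reach_refl (G : FinHypergraph V) (u : V) : G.Reach u u := ⟨0, nwalk_refl G u⟩

theorem nwalk_zero {G : FinHypergraph V} {u v : V} (h : G.NWalk u v 0) : u = v := by
  obtain ⟨vs, es, h0, hl, _⟩ := h; rw [← h0, ← hl]

theorem nwalk_single {G : FinHypergraph V} {u v : V} {e : Finset V}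
    (he : e ∈ G.edges) (hu : u ∈ e) (hv : v ∈ e) : G.NWalk u v 1 := by
  refine ⟨fun n => if n = 0 then u else v, fun _ => e, by simp, by simp, ?_⟩
  intro i hi
  interval_cases i
  simpa using ⟨he, hu, hv⟩

theorem nwalk_concat {G : FinHypergraph V} {u v w : V} {l₁ l₂ : ℕ}
    (h1 : G.NWalk u v l₁) (h2 : G.NWalk v w l₂) : G.NWalk u w (l₁ + l₂) := by
  obtain ⟨vs, es, h0, hl, hstep⟩ := h1
  obtain ⟨vs', es', h0', hl', hstep'⟩ := h2
  refine ⟨fun n => if n ≤ l₁ then vs n else vs' (n - l₁),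
    fun n => if n < l₁ then es n else es' (n - l₁), by simp [h0], ?_, ?_⟩
  · by_cases h : l₂ = 0
    · subst h
      have : w = v := (h0'.symm.trans hl').symm
      simp [this, hl]
    · have h' : ¬ l₁ + l₂ ≤ l₁ := by omega
      simp only [h', if_neg, if_false]
      simpa using hl'
  · intro i hi
    by_cases h : i < l₁
    · obtain ⟨he, ha, hb⟩ := hstep i h
      have e1 : (if i < l₁ then es i else es' (i - l₁)) = es i := if_pos h
      have e2 : (if i ≤ l₁ then vs i else vs' (i - l₁)) = vs i := if_pos h.le
      have e3 : (if i + 1 ≤ l₁ then vs (i+1) else vs' (i + 1 - l₁)) = vs (i+1) := if_pos h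
      exact ⟨by simp only [e1]; exact he, by simp only [e1, e2]; exact ha,
        by simp only [e1, e3]; exact hb⟩
    · obtain ⟨he, ha, hb⟩ := hstep' (i - l₁) (by omega)
      have e1 : (if i < l₁ then es i else es' (i - l₁)) = es' (i - l₁) := if_neg h
      have e3 : (if i + 1 ≤ l₁ then vs (i+1) else vs' (i + 1 - l₁)) = vs' (i - l₁ + 1) := by
        rw [if_neg (by omega)]
        congr 1
        omega
      refine ⟨by simp only [e1]; exact he, ?_, by simp only [e1, e3]; exact hb⟩
      have e2 : (if i ≤ l₁ then vs i else vs' (i - l₁)) = vs' (i - l₁) := by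
        by_cases h' : i ≤ l₁
        · have hi' : i = l₁ := by omega
          rw [if_pos h', hi', hl, Nat.sub_self, h0']
        · exact if_neg h'
      simp only [e1, e2]
      exact ha

theorem nwalk_reverse {G : FinHypergraph V} {u v : V} {l : ℕ}
    (h : G.NWalk u v l) : G.NWalk v u l := by
  obtain ⟨vs, es, h0, hl, hstep⟩ := h
  refine ⟨fun n => vs (l - n), fun n => es (l - n - 1), by simp [hl], by simp [h0], ?_⟩
  intro i hi
  obtain ⟨he, ha, hb⟩ := hstep (l - i - 1) (by omega)
  refine ⟨he, ?_, ?_⟩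
  · show vs (l - i) ∈ es (l - i - 1)
    have : l - i = l - i - 1 + 1 := by omega
    rw [this]; exact hb
  · show vs (l - (i + 1)) ∈ es (l - i - 1)
    have : l - (i + 1) = l - i - 1 := by omega
    rw [this]; exact ha

theorem reach_trans {G : FinHypergraph V} {u v w : V} (h1 : G.Reach u v) (h2 : G.Reach v w) :
    G.Reach u w := by
  obtain ⟨l1, h1⟩ := h1; obtain ⟨l2, h2⟩ := h2; exact ⟨l1 + l2, nwalk_concat h1 h2⟩

theorem reach_symm {G : FinHypergraph V} {u v : V} (h : G.Reach u v) : G.Reach v u := by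
  obtain ⟨l, h⟩ := h; exact ⟨l, nwalk_reverse h⟩

theorem reach_step {G : FinHypergraph V} {u v : V} {e : Finset V}
    (he : e ∈ G.edges) (hu : u ∈ e) (hv : v ∈ e) : G.Reach u v :=
  ⟨1, nwalk_single he hu hv⟩

theorem connected_iff_reach {G : FinHypergraph V} :
    G.Connected ↔ ∀ u v : V, G.Reach u v := by
  unfold Connected Reach
  simp only [walk_iff_nwalk]

/-- hdist is attained when reachable. -/
theorem nwalk_hdist {G : FinHypergraph V} {u v : V} (h : G.Reach u v) :
    G.NWalk u v (G.hdist u v) := by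
  have : {l | G.Walk u v l}.Nonempty := by
    obtain ⟨l, hl⟩ := h; exact ⟨l, walk_iff_nwalk.2 hl⟩
  exact walk_iff_nwalk.1 (Nat.sInf_mem this)

theorem hdist_le {G : FinHypergraph V} {u v : V} {l : ℕ} (h : G.NWalk u v l) :
    G.hdist u v ≤ l :=
  Nat.sInf_le (walk_iff_nwalk.2 h)

theorem eq_of_hdist_eq_zero {G : FinHypergraph V} {u v : V} (h : G.Reach u v)
    (h0 : G.hdist u v = 0) : u = v :=
  nwalk_zero (h0 ▸ nwalk_hdist h)

end FinHypergraph
namespace FinHypergraph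

variable {V : Type*}

/-- Splicing out a repeated vertex. -/
theorem nwalk_splice_v {G : FinHypergraph V} {u v : V} {l : ℕ} {vs : ℕ → V} {es : ℕ → Finset V}
    (h0 : vs 0 = u) (hl : vs l = v)
    (hstep : ∀ i < l, es i ∈ G.edges ∧ vs i ∈ es i ∧ vs (i + 1) ∈ es i)
    {i j : ℕ} (hij : i < j) (hjl : j ≤ l) (hv : vs i = vs j) :
    G.NWalk u v (l - (j - i)) := by
  set D := j - i with hD
  refine ⟨fun n => if n < i then vs n else vs (n + D), fun n => if n < i then es n else es (n + D),
    ?_, ?_, ?_⟩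
  · by_cases h : 0 < i
    · simpa [h] using h0
    · have hi0 : i = 0 := by omega
      have : ¬ (0 : ℕ) < i := by omega
      simp only [this, if_neg, if_false]
      rw [show 0 + D = j by omega, ← hv, hi0, h0]
  · have h : ¬ l - D < i := by omega
    simp only [h, if_neg, if_false]
    rw [show l - D + D = l by omega, hl]
  · intro n hn
    by_cases h : n < i
    · obtain ⟨he, ha, hb⟩ := hstep n (by omega)
      have e1 : (if n < i then es n else es (n + D)) = es n := if_pos h
      have e2 : (if n < i then vs n else vs (n + D)) = vs n := if_pos h
      have e3 : (if n + 1 < i then vs (n+1) else vs (n + 1 + D)) = vs (n + 1) := by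
        by_cases h' : n + 1 < i
        · exact if_pos h'
        · have : n + 1 = i := by omega
          rw [if_neg h', this, show i + D = j by omega, ← hv]
      refine ⟨?_, ?_, ?_⟩
      · simp only []; rw [e1]; exact he
      · simp only []; rw [e1, e2]; exact ha
      · simp only []; rw [e1, e3]; exact hb
    · obtain ⟨he, ha, hb⟩ := hstep (n + D) (by omega)
      have e1 : (if n < i then es n else es (n + D)) = es (n + D) := if_neg h
      have e2 : (if n < i then vs n else vs (n + D)) = vs (n + D) := if_neg h
      have e3 : (if n + 1 < i then vs (n+1) else vs (n + 1 + D)) = vs (n + D + 1) := by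
        rw [if_neg (by omega)]; congr 1; omega
      refine ⟨?_, ?_, ?_⟩
      · simp only []; rw [e1]; exact he
      · simp only []; rw [e1, e2]; exact ha
      · simp only []; rw [e1, e3]; exact hb

/-- Splicing out a repeated edge. -/
theorem nwalk_splice_e {G : FinHypergraph V} {u v : V} {l : ℕ} {vs : ℕ → V} {es : ℕ → Finset V}
    (h0 : vs 0 = u) (hl : vs l = v)
    (hstep : ∀ i < l, es i ∈ G.edges ∧ vs i ∈ es i ∧ vs (i + 1) ∈ es i)
    {i j : ℕ} (hij : i < j) (hjl : j < l) (hv : es i = es j) :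
    G.NWalk u v (l - (j - i)) := by
  set D := j - i with hD
  refine ⟨fun n => if n ≤ i then vs n else vs (n + D), fun n => if n < i then es n else es (n + D),
    ?_, ?_, ?_⟩
  · simpa using h0
  · have h : ¬ l - D ≤ i := by omega
    simp only [h, if_neg, if_false]
    rw [show l - D + D = l by omega, hl]
  · intro n hn
    by_cases h : n < i
    · obtain ⟨he, ha, hb⟩ := hstep n (by omega)
      have e1 : (if n < i then es n else es (n + D)) = es n := if_pos h
      have e2 : (if n ≤ i then vs n else vs (n + D)) = vs n := if_pos h.le
      have e3 : (if n + 1 ≤ i then vs (n+1) else vs (n + 1 + D)) = vs (n + 1) := if_pos h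
      refine ⟨?_, ?_, ?_⟩
      · simp only []; rw [e1]; exact he
      · simp only []; rw [e1, e2]; exact ha
      · simp only []; rw [e1, e3]; exact hb
    · have e1 : (if n < i then es n else es (n + D)) = es (n + D) := if_neg h
      have e3 : (if n + 1 ≤ i then vs (n+1) else vs (n + 1 + D)) = vs (n + D + 1) := by
        rw [if_neg (by omega)]; congr 1; omega
      by_cases h' : n ≤ i
      · have hni : n = i := by omega
        obtain ⟨he, ha, hb⟩ := hstep j (by omega)
        have e2 : (if n ≤ i then vs n else vs (n + D)) = vs n := if_pos h'
        have hej : es (n + D) = es j := by rw [hni]; congr 1; omega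
        refine ⟨?_, ?_, ?_⟩
        · simp only []; rw [e1, hej]; exact he
        · simp only []; rw [e1, e2, hej, hni, ← hv]
          exact (hstep i (by omega)).2.1
        · simp only []; rw [e1, e3, hej, show n + D + 1 = j + 1 by omega]
          exact hb
      · obtain ⟨he, ha, hb⟩ := hstep (n + D) (by omega)
        have e2 : (if n ≤ i then vs n else vs (n + D)) = vs (n + D) := if_neg h'
        refine ⟨?_, ?_, ?_⟩
        · simp only []; rw [e1]; exact he
        · simp only []; rw [e1, e2]; exact ha
        · simp only []; rw [e1, e3]; exact hb

/-- Any walk of minimal length is a path: vertices and edges are injective. -/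
theorem nwalk_data_inj {G : FinHypergraph V} {u v : V} {l : ℕ} {vs : ℕ → V} {es : ℕ → Finset V}
    (h0 : vs 0 = u) (hl : vs l = v)
    (hstep : ∀ i < l, es i ∈ G.edges ∧ vs i ∈ es i ∧ vs (i + 1) ∈ es i)
    (hmin : l ≤ G.hdist u v) :
    (∀ i ≤ l, ∀ j ≤ l, vs i = vs j → i = j) ∧
    (∀ i < l, ∀ j < l, es i = es j → i = j) := by
  constructor
  · intro i hi j hj hv
    by_contra hne
    rcases Nat.lt_or_ge i j with h | h
    · have := hdist_le (nwalk_splice_v h0 hl hstep h hj hv)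
      omega
    · have hji : j < i := by omega
      have := hdist_le (nwalk_splice_v h0 hl hstep hji hi hv.symm)
      omega
  · intro i hi j hj hv
    by_contra hne
    rcases Nat.lt_or_ge i j with h | h
    · have := hdist_le (nwalk_splice_e h0 hl hstep h hj hv)
      omega
    · have hji : j < i := by omega
      have := hdist_le (nwalk_splice_e h0 hl hstep hji hi hv.symm)
      omega

/-- Build a `HasCycle` witness from ℕ-indexed data. -/
theorem hasCycle_of_nat {G : FinHypergraph V} {l : ℕ} (hl : 2 ≤ l)
    (vs : ℕ → V) (es : ℕ → Finset V)
    (hvs : ∀ i < l, ∀ j < l, vs i = vs j → i = j)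
    (hes : ∀ i < l, ∀ j < l, es i = es j → i = j)
    (hedge : ∀ i < l, es i ∈ G.edges)
    (hmem : ∀ i < l, vs i ∈ es i ∧ vs ((i + 1) % l) ∈ es i) :
    G.HasCycle := by
  refine ⟨l, hl, fun i => vs i.val, fun i => es i.val, ?_, ?_, fun i => hedge i.val i.isLt, ?_⟩
  · intro a b h
    exact Fin.ext (hvs a.val a.isLt b.val b.isLt h)
  · intro a b h
    exact Fin.ext (hes a.val a.isLt b.val b.isLt h)
  · intro i
    exact hmem i.val i.isLt

/-- A 2-cycle: two distinct edges sharing two distinct vertices. -/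
theorem hasCycle_two {G : FinHypergraph V} {a b : V} {e₁ e₂ : Finset V}
    (he₁ : e₁ ∈ G.edges) (he₂ : e₂ ∈ G.edges) (hee : e₁ ≠ e₂) (hab : a ≠ b)
    (ha1 : a ∈ e₁) (hb1 : b ∈ e₁) (ha2 : a ∈ e₂) (hb2 : b ∈ e₂) : G.HasCycle := by
  refine hasCycle_of_nat (le_refl 2) (fun n => if n = 0 then a else b)
    (fun n => if n = 0 then e₁ else e₂) ?_ ?_ ?_ ?_
  · intro i hi j hj h
    interval_cases i <;> interval_cases j <;> simp_all
  · intro i hi j hj h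
    interval_cases i <;> interval_cases j <;> simp_all
  · intro i hi; interval_cases i <;> simp [he₁, he₂]
  · intro i hi; interval_cases i <;> simp_all

theorem hasCycle_three {G : FinHypergraph V} {a b c : V} {e₁ e₂ e₃ : Finset V}
    (he₁ : e₁ ∈ G.edges) (he₂ : e₂ ∈ G.edges) (he₃ : e₃ ∈ G.edges)
    (h12 : e₁ ≠ e₂) (h13 : e₁ ≠ e₃) (h23 : e₂ ≠ e₃)
    (hab : a ≠ b) (hac : a ≠ c) (hbc : b ≠ c)
    (ha1 : a ∈ e₁) (hb1 : b ∈ e₁) (hb2 : b ∈ e₂) (hc2 : c ∈ e₂)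
    (hc3 : c ∈ e₃) (ha3 : a ∈ e₃) : G.HasCycle := by
  refine hasCycle_of_nat (by omega : 2 ≤ 3) (fun n => if n = 0 then a else if n = 1 then b else c)
    (fun n => if n = 0 then e₁ else if n = 1 then e₂ else e₃) ?_ ?_ ?_ ?_
  · intro i hi j hj h
    interval_cases i <;> interval_cases j <;> simp_all
  · intro i hi j hj h
    interval_cases i <;> interval_cases j <;> simp_all
  · intro i hi; interval_cases i <;> simp [he₁, he₂, he₃]
  · intro i hi; interval_cases i <;> simp_all

theorem hasCycle_four {G : FinHypergraph V} {a b c d : V} {e₁ e₂ e₃ e₄ : Finset V}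
    (he₁ : e₁ ∈ G.edges) (he₂ : e₂ ∈ G.edges) (he₃ : e₃ ∈ G.edges) (he₄ : e₄ ∈ G.edges)
    (h12 : e₁ ≠ e₂) (h13 : e₁ ≠ e₃) (h14 : e₁ ≠ e₄) (h23 : e₂ ≠ e₃) (h24 : e₂ ≠ e₄)
    (h34 : e₃ ≠ e₄)
    (hab : a ≠ b) (hac : a ≠ c) (had : a ≠ d) (hbc : b ≠ c) (hbd : b ≠ d) (hcd : c ≠ d)
    (ha1 : a ∈ e₁) (hb1 : b ∈ e₁) (hb2 : b ∈ e₂) (hc2 : c ∈ e₂)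
    (hc3 : c ∈ e₃) (hd3 : d ∈ e₃) (hd4 : d ∈ e₄) (ha4 : a ∈ e₄) : G.HasCycle := by
  refine hasCycle_of_nat (by omega : 2 ≤ 4)
    (fun n => if n = 0 then a else if n = 1 then b else if n = 2 then c else d)
    (fun n => if n = 0 then e₁ else if n = 1 then e₂ else if n = 2 then e₃ else e₄) ?_ ?_ ?_ ?_
  · intro i hi j hj h
    interval_cases i <;> interval_cases j <;> simp_all
  · intro i hi j hj h
    interval_cases i <;> interval_cases j <;> simp_all
  · intro i hi; interval_cases i <;> simp [he₁, he₂, he₃, he₄]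
  · intro i hi; interval_cases i <;> simp_all

/-- In an acyclic hypergraph, two distinct vertices of an edge `e` are not
connected outside `e`. -/
theorem not_reach_erase [DecidableEq V] {G : FinHypergraph V} (hac : ¬ G.HasCycle) {e : Finset V} {a b : V}
    (he : e ∈ G.edges) (ha : a ∈ e) (hb : b ∈ e) (hab : a ≠ b) :
    ¬ (FinHypergraph.mk (G.edges.erase e)).Reach a b := by
  intro hr
  obtain ⟨vs, es, h0, hl, hstep⟩ := nwalk_hdist hr
  obtain ⟨hvinj, heinj⟩ := nwalk_data_inj h0 hl hstep le_rfl
  generalize ht : (FinHypergraph.mk (G.edges.erase e)).hdist a b = t at hl hstep hvinj heinj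
  have hestep : ∀ i < t, es i ∈ G.edges.erase e ∧ vs i ∈ es i ∧ vs (i + 1) ∈ es i := hstep
  have ht1 : 1 ≤ t := by
    rcases Nat.eq_zero_or_pos t with h | h
    · subst h; exact absurd (h0.symm.trans hl) hab
    · omega
  apply hac
  refine hasCycle_of_nat (l := t + 1) (by omega) vs (fun n => if n = t then e else es n)
    ?_ ?_ ?_ ?_
  · intro i hi j hj h
    exact hvinj i (by omega) j (by omega) h
  · intro i hi j hj h
    rcases Nat.lt_or_ge i t with h1 | h1 <;> rcases Nat.lt_or_ge j t with h2 | h2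
    · rw [if_neg (by omega), if_neg (by omega)] at h
      exact heinj i h1 j h2 h
    · have hjt : j = t := by omega
      rw [if_neg (by omega), if_pos hjt] at h
      exact absurd h (Finset.mem_erase.1 (hestep i h1).1).1
    · have hit : i = t := by omega
      rw [if_pos hit, if_neg (by omega)] at h
      exact absurd h.symm (Finset.mem_erase.1 (hestep j h2).1).1
    · omega
  · intro i hi
    rcases Nat.lt_or_ge i t with h1 | h1
    · rw [if_neg (by omega)]
      exact Finset.mem_of_mem_erase (hestep i h1).1
    · rw [if_pos (by omega)]
      exact he
  · intro i hi
    rcases Nat.lt_or_ge i t with h1 | h1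
    · rw [if_neg (by omega)]
      refine ⟨(hestep i h1).2.1, ?_⟩
      rw [Nat.mod_eq_of_lt (by omega)]
      exact (hestep i h1).2.2
    · have hit : i = t := by omega
      rw [if_pos hit]
      constructor
      · rw [hit, hl]; exact hb
      · rw [hit, Nat.mod_self, h0]; exact ha

end FinHypergraph
namespace FinHypergraph

variable {V : Type*}

open Classical in
/-- A chosen "descent step" towards `r`: an edge through `w` together with a vertex
closer to `r`. -/
noncomputable def estep (H : FinHypergraph V) (r w : V) : Finset V × V :=
  if h : ∃ p : Finset V × V, p.1 ∈ H.edges ∧ w ∈ p.1 ∧ p.2 ∈ p.1 ∧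
      H.hdist p.2 r < H.hdist w r then h.choose else (∅, w)

theorem estep_spec {H : FinHypergraph V} {r w : V} (hcon : ∀ a b : V, H.Reach a b)
    (hw : w ≠ r) :
    (H.estep r w).1 ∈ H.edges ∧ w ∈ (H.estep r w).1 ∧ (H.estep r w).2 ∈ (H.estep r w).1 ∧
      H.hdist (H.estep r w).2 r < H.hdist w r := by
  have hex : ∃ p : Finset V × V, p.1 ∈ H.edges ∧ w ∈ p.1 ∧ p.2 ∈ p.1 ∧
      H.hdist p.2 r < H.hdist w r := by
    obtain ⟨vs, es, h0, hl, hstep⟩ := nwalk_hdist (hcon w r)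
    have ht1 : 1 ≤ H.hdist w r := by
      rcases Nat.eq_zero_or_pos (H.hdist w r) with h | h
      · exact absurd (eq_of_hdist_eq_zero (hcon w r) h) hw
      · exact h
    obtain ⟨he, ha, hb⟩ := hstep 0 (by omega)
    refine ⟨(es 0, vs 1), he, h0 ▸ ha, hb, ?_⟩
    have hw1 : H.NWalk (vs 1) r (H.hdist w r - 1) := by
      refine ⟨fun n => vs (n + 1), fun n => es (n + 1), rfl, ?_, ?_⟩
      · show vs (H.hdist w r - 1 + 1) = r
        rw [show H.hdist w r - 1 + 1 = H.hdist w r by omega, hl]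
      · intro i hi
        exact hstep (i + 1) (by omega)
    have := hdist_le hw1
    show H.hdist (vs 1) r < H.hdist w r
    omega
  unfold estep
  rw [dif_pos hex]
  exact hex.choose_spec

variable [Fintype V] [DecidableEq V]

/-- The set of non-root vertices whose chosen descent edge is `e`. -/
noncomputable def fiber (H : FinHypergraph V) (r : V) (e : Finset V) : Finset V :=
  (Finset.univ.erase r).filter (fun w => (H.estep r w).1 = e)

theorem fiber_card_sum {H : FinHypergraph V} {r : V} (hcon : ∀ a b : V, H.Reach a b) :
    ∑ e ∈ H.edges, (H.fiber r e).card = (Finset.univ.erase r : Finset V).card := by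
  refine (Finset.card_eq_sum_card_fiberwise ?_).symm
  intro w hw
  exact (estep_spec hcon (Finset.ne_of_mem_erase hw)).1

theorem fiber_exclude {H : FinHypergraph V} {r : V} {e : Finset V}
    (hcon : ∀ a b : V, H.Reach a b) (hne : (H.fiber r e).Nonempty) :
    ∃ w', w' ∈ e ∧ H.fiber r e ⊆ e.erase w' ∧
      ∀ y ∈ H.fiber r e, H.hdist w' r < H.hdist y r := by
  obtain ⟨w0, hw0, hmin⟩ := Finset.exists_min_image (H.fiber r e) (fun w => H.hdist w r) hne
  have hw0r : w0 ≠ r := Finset.ne_of_mem_erase (Finset.mem_filter.1 hw0).1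
  obtain ⟨hedge, hmem, hmem', hlt⟩ := estep_spec hcon hw0r
  have he0 : (H.estep r w0).1 = e := (Finset.mem_filter.1 hw0).2
  have hyee : ∀ y ∈ H.fiber r e, y ∈ e := by
    intro y hy
    have h1 := (Finset.mem_filter.1 hy).2
    have h2 := (estep_spec hcon (Finset.ne_of_mem_erase (Finset.mem_filter.1 hy).1)).2.1
    rwa [h1] at h2
  have hltall : ∀ y ∈ H.fiber r e, H.hdist (H.estep r w0).2 r < H.hdist y r := by
    intro y hy
    calc H.hdist (H.estep r w0).2 r < H.hdist w0 r := hlt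
    _ ≤ H.hdist y r := hmin y hy
  refine ⟨(H.estep r w0).2, he0 ▸ hmem', ?_, hltall⟩
  intro y hy
  refine Finset.mem_erase.2 ⟨?_, hyee y hy⟩
  intro hyw
  have := hltall y hy
  rw [hyw] at this
  omega

theorem fiber_card_le {H : FinHypergraph V} {k : ℕ} {r : V} {e : Finset V}
    (hcon : ∀ a b : V, H.Reach a b) (huni : H.Uniform k) (he : e ∈ H.edges) :
    (H.fiber r e).card ≤ k - 1 := by
  rcases (H.fiber r e).eq_empty_or_nonempty with h | h
  · simp [h]
  · obtain ⟨w', hw', hsub, _⟩ := fiber_exclude hcon h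
    calc (H.fiber r e).card ≤ (e.erase w').card := Finset.card_le_card hsub
    _ = k - 1 := by rw [Finset.card_erase_of_mem hw', huni e he]

theorem fiber_card_ge {H : FinHypergraph V} {k : ℕ} {r : V} {e : Finset V}
    (hcon : ∀ a b : V, H.Reach a b) (hac : ¬ H.HasCycle) (huni : H.Uniform k)
    (he : e ∈ H.edges) : k - 1 ≤ (H.fiber r e).card := by
  classical
  have hR1 : (e.filter (fun w => (FinHypergraph.mk (H.edges.erase e)).Reach w r)).card ≤ 1 := by
    by_contra hgt
    obtain ⟨w1, hw1, w2, hw2, hne⟩ := Finset.one_lt_card.1 (Nat.lt_of_not_le hgt)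
    exact not_reach_erase hac he (Finset.mem_of_mem_filter w1 hw1)
      (Finset.mem_of_mem_filter w2 hw2) hne
      (reach_trans (Finset.mem_filter.1 hw1).2 (reach_symm (Finset.mem_filter.1 hw2).2))
  have hsub : e \ (e.filter (fun w => (FinHypergraph.mk (H.edges.erase e)).Reach w r)) ⊆
      H.fiber r e := by
    intro w hw
    obtain ⟨hwe, hwR⟩ := Finset.mem_sdiff.1 hw
    have hnr : ¬ (FinHypergraph.mk (H.edges.erase e)).Reach w r := fun hr =>
      hwR (Finset.mem_filter.2 ⟨hwe, hr⟩)
    have hwr : w ≠ r := by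
      intro h
      rw [h] at hnr
      exact hnr (reach_refl _ r)
    obtain ⟨hedge, hmem, hmem', hlt⟩ := estep_spec hcon hwr
    refine Finset.mem_filter.2 ⟨Finset.mem_erase.2 ⟨hwr, Finset.mem_univ w⟩, ?_⟩
    -- build the combined walk
    obtain ⟨vsm, esm, hm0, hml, hmstep⟩ := nwalk_hdist (hcon (H.estep r w).2 r)
    set L' := H.hdist (H.estep r w).2 r with hL'
    set vsc : ℕ → V := fun n => Nat.casesOn n w (fun m => vsm m) with hvsc
    set esc : ℕ → Finset V := fun n => Nat.casesOn n (H.estep r w).1 (fun m => esm m) with hesc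
    have hcl : vsc (L' + 1) = r := hml
    have hcstep : ∀ i < L' + 1, esc i ∈ H.edges ∧ vsc i ∈ esc i ∧ vsc (i + 1) ∈ esc i := by
      intro i hi
      cases i with
      | zero =>
        refine ⟨hedge, hmem, ?_⟩
        show vsm 0 ∈ (H.estep r w).1
        rw [hm0]
        exact hmem'
      | succ m => exact hmstep m (by omega)
    have hwalk : H.NWalk w r (L' + 1) := ⟨vsc, esc, rfl, hcl, hcstep⟩
    have hminl : L' + 1 ≤ H.hdist w r := by
      have := hdist_le hwalk
      omega
    obtain ⟨hvinj, heinj⟩ := nwalk_data_inj rfl hcl hcstep hminl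
    have huse : ∃ n, n < L' + 1 ∧ esc n = e := by
      by_contra hnone
      push_neg at hnone
      refine hnr ⟨L' + 1, vsc, esc, rfl, hcl, ?_⟩
      intro i hi
      obtain ⟨h1, h2, h3⟩ := hcstep i hi
      exact ⟨Finset.mem_erase.2 ⟨hnone i hi, h1⟩, h2, h3⟩
    obtain ⟨hilt, hie⟩ := Nat.find_spec huse
    have hprefix : ∀ m < Nat.find huse, esc m ≠ e := by
      intro m hm
      have := Nat.find_min huse hm
      push_neg at this
      exact this (by omega)
    have hri : (FinHypergraph.mk (H.edges.erase e)).Reach w (vsc (Nat.find huse)) := by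
      refine ⟨Nat.find huse, vsc, esc, rfl, rfl, ?_⟩
      intro m hm
      obtain ⟨h1, h2, h3⟩ := hcstep m (by omega)
      exact ⟨Finset.mem_erase.2 ⟨hprefix m hm, h1⟩, h2, h3⟩
    have hvie : vsc (Nat.find huse) ∈ e := by
      have := (hcstep (Nat.find huse) hilt).2.1
      rwa [hie] at this
    have hviw : vsc (Nat.find huse) = w := by
      by_contra hne
      exact not_reach_erase hac he hwe hvie (fun h => hne h.symm) hri
    have hi0 : Nat.find huse = 0 := hvinj (Nat.find huse) (by omega) 0 (by omega) hviw
    rw [hi0] at hie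
    exact hie
  have h2 := Finset.card_sdiff_of_subset
    (Finset.filter_subset (fun w => (FinHypergraph.mk (H.edges.erase e)).Reach w r) e)
  have h3 := Finset.card_le_card hsub
  have h4 := huni e he
  omega

theorem count_of_tree {H : FinHypergraph V} {k : ℕ}
    (hcon : ∀ a b : V, H.Reach a b) (hac : ¬ H.HasCycle) (huni : H.Uniform k) (r : V) :
    (Finset.univ.erase r : Finset V).card = H.edges.card * (k - 1) := by
  rw [← fiber_card_sum hcon (r := r),
    Finset.sum_congr rfl (fun e he => le_antisymm (fiber_card_le hcon huni he)
      (fiber_card_ge hcon hac huni he)), Finset.sum_const, smul_eq_mul]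

theorem acyclic_of_count {H : FinHypergraph V} {k : ℕ} (hk : 2 ≤ k)
    (hcon : ∀ a b : V, H.Reach a b) (huni : H.Uniform k) (r : V)
    (hcount : (Finset.univ.erase r : Finset V).card = H.edges.card * (k - 1)) :
    ¬ H.HasCycle := by
  intro hcyc
  have hall : ∀ e ∈ H.edges, (H.fiber r e).card = k - 1 := by
    by_contra hne
    push_neg at hne
    obtain ⟨e0, he0, hne0⟩ := hne
    have hlt : ∑ e ∈ H.edges, (H.fiber r e).card < ∑ e ∈ H.edges, (k - 1) :=
      Finset.sum_lt_sum (fun e he => fiber_card_le hcon huni he)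
        ⟨e0, he0, lt_of_le_of_ne (fiber_card_le hcon huni he0) hne0⟩
    rw [fiber_card_sum hcon, hcount, Finset.sum_const, smul_eq_mul] at hlt
    omega
  obtain ⟨l, hl, vs, es, hvinj, heinj, hedge, hmem⟩ := hcyc
  obtain ⟨i, -, hmax⟩ := Finset.exists_max_image (Finset.univ : Finset (Fin l))
    (fun i => H.hdist (vs i) r) ⟨⟨0, by omega⟩, Finset.mem_univ _⟩
  set n := i.val with hn
  have hnl : n < l := i.isLt
  have hsucc : ((n + (l - 1)) % l + 1) % l = n := by
    rcases Nat.eq_zero_or_pos n with h | h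
    · have e1 : (n + (l - 1)) % l = l - 1 := by
        rw [h, Nat.zero_add]
        exact Nat.mod_eq_of_lt (by omega)
      rw [e1, Nat.sub_add_cancel (by omega), Nat.mod_self, h]
    · have e1 : (n + (l - 1)) % l = n - 1 := by
        rw [show n + (l - 1) = (n - 1) + l by omega, Nat.add_mod_right]
        exact Nat.mod_eq_of_lt (by omega)
      rw [e1, show n - 1 + 1 = n by omega]
      exact Nat.mod_eq_of_lt hnl
  have hkey : (n + 1) % l ≠ n := by
    intro h
    rcases Nat.lt_or_ge (n + 1) l with h1 | h1
    · rw [Nat.mod_eq_of_lt h1] at h; omega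
    · have hn1 : n + 1 = l := by omega
      rw [hn1, Nat.mod_self] at h
      omega
  set j : Fin l := ⟨(n + (l - 1)) % l, Nat.mod_lt _ (by omega)⟩ with hj
  set ip : Fin l := ⟨(n + 1) % l, Nat.mod_lt _ (by omega)⟩ with hip
  have hji : j ≠ i := by
    intro h
    have : (n + (l - 1)) % l = n := congrArg Fin.val h
    rw [this] at hsucc
    exact hkey hsucc
  have hipi : ip ≠ i := by
    intro h
    exact hkey (congrArg Fin.val h)
  have hwg1 : vs i ∈ es j := by
    have h1 := (hmem j).2
    have h2 : (⟨((j : ℕ) + 1) % l, Nat.mod_lt _ (by omega)⟩ : Fin l) = i := Fin.ext hsucc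
    rwa [h2] at h1
  have hwg2 : vs i ∈ es i := (hmem i).1
  have hwpg2 : vs ip ∈ es i := by
    have h1 := (hmem i).2
    have h2 : (⟨((i : ℕ) + 1) % l, Nat.mod_lt _ (by omega)⟩ : Fin l) = ip := rfl
    rwa [h2] at h1
  have hwmg1 : vs j ∈ es j := (hmem j).1
  have hwr : vs i ≠ r := by
    intro h
    have h0 : H.hdist (vs i) r = 0 := by
      have hw : H.NWalk (vs i) r 0 := by rw [h]; exact nwalk_refl H r
      have := hdist_le hw
      omega
    have h1 : H.hdist (vs ip) r = 0 := by
      have := hmax ip (Finset.mem_univ _)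
      omega
    have h2 : vs ip = r := eq_of_hdist_eq_zero (hcon _ _) h1
    exact hipi (hvinj (h2.trans h.symm))
  have hfull : ∀ g : Fin l, ∃ w', w' ∈ es g ∧ H.fiber r (es g) = (es g).erase w' ∧
      ∀ y ∈ H.fiber r (es g), H.hdist w' r < H.hdist y r := by
    intro g
    have hcard : (H.fiber r (es g)).card = k - 1 := hall _ (hedge g)
    have hne : (H.fiber r (es g)).Nonempty := by
      rw [← Finset.card_pos, hcard]; omega
    obtain ⟨w', hw', hsub, hlt⟩ := fiber_exclude hcon hne
    refine ⟨w', hw', Finset.eq_of_subset_of_card_le hsub ?_, hlt⟩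
    rw [Finset.card_erase_of_mem hw', huni _ (hedge g), hcard]
  have hgets : ∀ g : Fin l, vs i ∈ es g → (∃ p : Fin l, p ≠ i ∧ vs p ∈ es g) →
      (H.estep r (vs i)).1 = es g := by
    rintro g hig ⟨p, hpi, hpg⟩
    obtain ⟨w', hw', heq, hlt⟩ := hfull g
    by_cases hww : vs i = w'
    · exfalso
      have hyp : vs p ∈ H.fiber r (es g) := by
        rw [heq]
        exact Finset.mem_erase.2 ⟨fun h => hpi (hvinj (h.trans hww.symm)), hpg⟩
      have h1 := hlt (vs p) hyp
      have h2 := hmax p (Finset.mem_univ _)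
      rw [← hww] at h1
      omega
    · have hfi : vs i ∈ H.fiber r (es g) := by
        rw [heq]
        exact Finset.mem_erase.2 ⟨hww, hig⟩
      exact (Finset.mem_filter.1 hfi).2
  have h1 : (H.estep r (vs i)).1 = es j := hgets j hwg1 ⟨j, hji, hwmg1⟩
  have h2 : (H.estep r (vs i)).1 = es i := hgets i hwg2 ⟨ip, hipi, hwpg2⟩
  exact hji (heinj (h1.symm.trans h2))

end FinHypergraph
namespace FinHypergraph

variable {V : Type*} [Fintype V]

/-- The `α`-spectral quadratic form. -/
noncomputable def qform (G : FinHypergraph V) (k : ℕ) (α : ℝ) (x : V → ℝ) : ℝ :=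
  ∑ e ∈ G.edges, (α * ∑ v ∈ e, x v ^ k + (1 - α) * (k : ℝ) * ∏ v ∈ e, x v)

theorem qform_nonneg {G : FinHypergraph V} {k : ℕ} {α : ℝ} (hα0 : 0 ≤ α) (hα1 : α ≤ 1)
    {x : V → ℝ} (hx : ∀ v, 0 ≤ x v) : 0 ≤ G.qform k α x := by
  refine Finset.sum_nonneg fun e he => ?_
  have h1 : (0:ℝ) ≤ ∑ v ∈ e, x v ^ k := Finset.sum_nonneg fun v _ => pow_nonneg (hx v) k
  have h2 : (0:ℝ) ≤ ∏ v ∈ e, x v := Finset.prod_nonneg fun v _ => hx v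
  have hk : (0:ℝ) ≤ (k : ℝ) := Nat.cast_nonneg k
  have e1 := mul_nonneg hα0 h1
  have e2 := mul_nonneg (mul_nonneg (by linarith : (0:ℝ) ≤ 1 - α) hk) h2
  linarith

theorem qform_le_bound {G : FinHypergraph V} {k : ℕ} (hk : 1 ≤ k) {α : ℝ} (hα0 : 0 ≤ α)
    (hα1 : α ≤ 1) {x : V → ℝ} (hx0 : ∀ v, 0 ≤ x v) (hx1 : (∑ v, x v ^ k) = 1) :
    G.qform k α x ≤ (G.edges.card : ℝ) * k := by
  have hle1 : ∀ v : V, x v ≤ 1 := by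
    intro v
    have h1 : x v ^ k ≤ 1 := by
      rw [← hx1]
      exact Finset.single_le_sum (fun w _ => pow_nonneg (hx0 w) k) (Finset.mem_univ v)
    exact (pow_le_one_iff_of_nonneg (hx0 v) (by omega)).1 h1
  have hterm : ∀ e ∈ G.edges,
      α * ∑ v ∈ e, x v ^ k + (1 - α) * (k : ℝ) * ∏ v ∈ e, x v ≤ (k : ℝ) := by
    intro e he
    have h1 : ∑ v ∈ e, x v ^ k ≤ 1 := by
      rw [← hx1]
      exact Finset.sum_le_sum_of_subset_of_nonneg (Finset.subset_univ e)
        (fun v _ _ => pow_nonneg (hx0 v) k)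
    have h1' : (0:ℝ) ≤ ∑ v ∈ e, x v ^ k := Finset.sum_nonneg fun v _ => pow_nonneg (hx0 v) k
    have h2 : ∏ v ∈ e, x v ≤ 1 := Finset.prod_le_one (fun v _ => hx0 v) (fun v _ => hle1 v)
    have h2' : (0:ℝ) ≤ ∏ v ∈ e, x v := Finset.prod_nonneg fun v _ => hx0 v
    have hk1 : (1:ℝ) ≤ (k : ℝ) := by exact_mod_cast hk
    have e1 : α * ∑ v ∈ e, x v ^ k ≤ α * 1 := mul_le_mul_of_nonneg_left h1 hα0
    have e2 : (1 - α) * (k:ℝ) * ∏ v ∈ e, x v ≤ (1 - α) * (k:ℝ) * 1 :=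
      mul_le_mul_of_nonneg_left h2 (mul_nonneg (by linarith) (by linarith))
    have e3 : 0 ≤ α * ((k:ℝ) - 1) := mul_nonneg hα0 (by linarith)
    linarith
  calc G.qform k α x ≤ ∑ _e ∈ G.edges, (k : ℝ) := Finset.sum_le_sum hterm
  _ = (G.edges.card : ℝ) * k := by rw [Finset.sum_const, nsmul_eq_mul]

theorem bddAbove_aspec_set (G : FinHypergraph V) {k : ℕ} (hk : 1 ≤ k) {α : ℝ} (hα0 : 0 ≤ α)
    (hα1 : α ≤ 1) :
    BddAbove {r : ℝ | ∃ x : V → ℝ, (∀ v, 0 ≤ x v) ∧ (∑ v, x v ^ k) = 1 ∧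
      r = ∑ e ∈ G.edges, (α * ∑ v ∈ e, x v ^ k + (1 - α) * (k : ℝ) * ∏ v ∈ e, x v)} := by
  refine ⟨(G.edges.card : ℝ) * k, ?_⟩
  rintro r ⟨x, hx0, hx1, rfl⟩
  exact qform_le_bound hk hα0 hα1 hx0 hx1

theorem qform_le_aspec {G : FinHypergraph V} {k : ℕ} (hk : 1 ≤ k) {α : ℝ} (hα0 : 0 ≤ α)
    (hα1 : α ≤ 1) {x : V → ℝ} (hx0 : ∀ v, 0 ≤ x v) (hx1 : (∑ v, x v ^ k) = 1) :
    G.qform k α x ≤ G.aspec k α := by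
  exact le_csSup (bddAbove_aspec_set G hk hα0 hα1) ⟨x, hx0, hx1, rfl⟩

theorem qform_le_mul {G : FinHypergraph V} {k : ℕ} (hk : 1 ≤ k) {α : ℝ}
    (huni : G.Uniform k) {ρ : ℝ} (hρ : 0 ≤ ρ)
    (hub : ∀ y : V → ℝ, (∀ v, 0 ≤ y v) → (∑ v, y v ^ k) = 1 → G.qform k α y ≤ ρ)
    (y : V → ℝ) (hy : ∀ v, 0 ≤ y v) : G.qform k α y ≤ ρ * ∑ v, y v ^ k := by
  set c := ∑ v, y v ^ k with hc
  have hc0 : 0 ≤ c := Finset.sum_nonneg fun v _ => pow_nonneg (hy v) k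
  rcases eq_or_lt_of_le hc0 with h | h
  · -- all coordinates vanish
    have hy0 : ∀ v : V, y v = 0 := by
      intro v
      have h1 : y v ^ k ≤ c := Finset.single_le_sum
        (fun w _ => pow_nonneg (hy w) k) (Finset.mem_univ v)
      have h2 : y v ^ k = 0 := le_antisymm (by rw [← h] at h1; exact h1) (pow_nonneg (hy v) k)
      exact pow_eq_zero_iff (by omega) |>.1 h2
    have hq : G.qform k α y = 0 := by
      unfold qform
      refine Finset.sum_eq_zero fun e he => ?_
      have hne : e.Nonempty := by
        rw [← Finset.card_pos, huni e he]; omega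
      obtain ⟨v0, hv0⟩ := hne
      have h1 : ∑ v ∈ e, y v ^ k = 0 := Finset.sum_eq_zero fun v _ => by
        rw [hy0 v]
        exact zero_pow (by omega)
      have h2 : ∏ v ∈ e, y v = 0 := Finset.prod_eq_zero hv0 (hy0 v0)
      rw [h1, h2]; ring
    rw [hq, ← h]
    simp
  · -- scale down
    set t := c ^ ((k : ℝ)⁻¹) with htdef
    have ht : 0 < t := Real.rpow_pos_of_pos h _
    have htk : t ^ k = c := by
      rw [htdef, ← Real.rpow_natCast (c ^ ((k:ℝ)⁻¹)) k, ← Real.rpow_mul h.le,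
        inv_mul_cancel₀ (by positivity : (k:ℝ) ≠ 0), Real.rpow_one]
    set z := fun v => y v / t with hzdef
    have hz0 : ∀ v, 0 ≤ z v := fun v => div_nonneg (hy v) ht.le
    have hzk : ∀ v : V, z v ^ k = y v ^ k / c := by
      intro v
      rw [hzdef]
      simp only []
      rw [div_pow, htk]
    have hz1 : (∑ v, z v ^ k) = 1 := by
      have e1 : (∑ v, z v ^ k) = ∑ v, y v ^ k / c := Finset.sum_congr rfl fun v _ => hzk v
      rw [e1, ← Finset.sum_div, ← hc, div_self (ne_of_gt h)]
    have hzq : G.qform k α z = G.qform k α y / c := by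
      unfold qform
      rw [Finset.sum_div]
      refine Finset.sum_congr rfl fun e he => ?_
      have h1 : ∑ v ∈ e, z v ^ k = (∑ v ∈ e, y v ^ k) / c := by
        rw [Finset.sum_div]
        exact Finset.sum_congr rfl fun v _ => hzk v
      have h2 : ∏ v ∈ e, z v = (∏ v ∈ e, y v) / c := by
        rw [hzdef]
        simp only []
        rw [Finset.prod_div_distrib, Finset.prod_const, huni e he, htk]
      rw [h1, h2]
      field_simp
    have := hub z hz0 hz1
    rw [hzq, div_le_iff₀ h] at this
    calc G.qform k α y ≤ ρ * c := by linarith [this]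
    _ = ρ * ∑ v, y v ^ k := by rw [hc]

theorem eigen_eq [DecidableEq V] {G : FinHypergraph V} {k : ℕ} (hk : 2 ≤ k) {α ρ : ℝ}
    {x : V → ℝ} (hxpos : ∀ v, 0 < x v)
    (hub : ∀ y : V → ℝ, (∀ v, 0 ≤ y v) → G.qform k α y ≤ ρ * ∑ v, y v ^ k)
    (hattain : G.qform k α x = ρ * ∑ v, x v ^ k) (w : V) :
    (k : ℝ) * (α * G.degree w - ρ) * x w ^ (k - 1) +
      (1 - α) * k * ∑ e ∈ G.edges.filter (fun e => w ∈ e), ∏ z ∈ e.erase w, x z = 0 := by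
  set S : ℝ := ∑ e ∈ G.edges.filter (fun e => w ∈ e), ∏ z ∈ e.erase w, x z with hS
  set A : ℝ := α * G.degree w - ρ with hA
  set B : ℝ := (1 - α) * k * S with hB
  set C : ℝ := α * ∑ e ∈ G.edges.filter (fun e => w ∈ e), ∑ z ∈ e.erase w, x z ^ k +
      ∑ e ∈ G.edges.filter (fun e => ¬ w ∈ e),
        (α * ∑ v ∈ e, x v ^ k + (1 - α) * (k : ℝ) * ∏ v ∈ e, x v) -
      ρ * ∑ v ∈ Finset.univ.erase w, x v ^ k with hC
  have hupdate : ∀ t : ℝ, G.qform k α (Function.update x w t) -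
      ρ * ∑ v, Function.update x w t v ^ k = A * t ^ k + B * t + C := by
    intro t
    have h1 : ∑ v, Function.update x w t v ^ k =
        t ^ k + ∑ v ∈ Finset.univ.erase w, x v ^ k := by
      rw [← Finset.add_sum_erase _ _ (Finset.mem_univ w), Function.update_self]
      congr 1
      exact Finset.sum_congr rfl fun v hv => by
        rw [Function.update_of_ne (Finset.ne_of_mem_erase hv)]
    have h2 : G.qform k α (Function.update x w t) =
        (α * G.degree w) * t ^ k + ((1 - α) * k * t) * S +
        (α * ∑ e ∈ G.edges.filter (fun e => w ∈ e), ∑ z ∈ e.erase w, x z ^ k +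
          ∑ e ∈ G.edges.filter (fun e => ¬ w ∈ e),
            (α * ∑ v ∈ e, x v ^ k + (1 - α) * (k : ℝ) * ∏ v ∈ e, x v)) := by
      unfold qform
      rw [← Finset.sum_filter_add_sum_filter_not G.edges (fun e => w ∈ e)]
      have hIn : ∑ e ∈ G.edges.filter (fun e => w ∈ e),
          (α * ∑ v ∈ e, Function.update x w t v ^ k +
            (1 - α) * (k : ℝ) * ∏ v ∈ e, Function.update x w t v) =
          ∑ e ∈ G.edges.filter (fun e => w ∈ e),
          (α * t ^ k + α * (∑ z ∈ e.erase w, x z ^ k) +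
            ((1 - α) * k * t) * (∏ z ∈ e.erase w, x z)) := by
        refine Finset.sum_congr rfl fun e he => ?_
        have hwe : w ∈ e := (Finset.mem_filter.1 he).2
        have hs : ∑ v ∈ e, Function.update x w t v ^ k =
            t ^ k + ∑ z ∈ e.erase w, x z ^ k := by
          rw [← Finset.add_sum_erase _ _ hwe, Function.update_self]
          congr 1
          exact Finset.sum_congr rfl fun z hz => by
            rw [Function.update_of_ne (Finset.ne_of_mem_erase hz)]
        have hp : ∏ v ∈ e, Function.update x w t v =
            t * ∏ z ∈ e.erase w, x z := by
          rw [← Finset.mul_prod_erase _ _ hwe, Function.update_self]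
          congr 1
          exact Finset.prod_congr rfl fun z hz => by
            rw [Function.update_of_ne (Finset.ne_of_mem_erase hz)]
        rw [hs, hp]
        ring
      have hOut : ∑ e ∈ G.edges.filter (fun e => ¬ w ∈ e),
          (α * ∑ v ∈ e, Function.update x w t v ^ k +
            (1 - α) * (k : ℝ) * ∏ v ∈ e, Function.update x w t v) =
          ∑ e ∈ G.edges.filter (fun e => ¬ w ∈ e),
          (α * ∑ v ∈ e, x v ^ k + (1 - α) * (k : ℝ) * ∏ v ∈ e, x v) := by
        refine Finset.sum_congr rfl fun e he => ?_
        have hwe : ¬ w ∈ e := (Finset.mem_filter.1 he).2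
        have hs : ∑ v ∈ e, Function.update x w t v ^ k = ∑ v ∈ e, x v ^ k :=
          Finset.sum_congr rfl fun v hv => by
            rw [Function.update_of_ne (fun h => hwe (by rw [← h]; exact hv))]
        have hp : ∏ v ∈ e, Function.update x w t v = ∏ v ∈ e, x v :=
          Finset.prod_congr rfl fun v hv => by
            rw [Function.update_of_ne (fun h => hwe (by rw [← h]; exact hv))]
        rw [hs, hp]
      rw [hIn, hOut]
      rw [Finset.sum_add_distrib, Finset.sum_add_distrib, Finset.sum_const, ← Finset.mul_sum,
        ← Finset.mul_sum, nsmul_eq_mul]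
      have hdeg : ((G.edges.filter (fun e => w ∈ e)).card : ℝ) = (G.degree w : ℝ) := by
        norm_cast
      rw [hdeg, ← hS]
      ring
    rw [h1, h2, hA, hB, hC]
    ring
  set gfun : ℝ → ℝ := fun t => A * t ^ k + B * t + C with hg
  have hg0 : gfun (x w) = 0 := by
    rw [hg]
    simp only []
    rw [← hupdate (x w), Function.update_eq_self, hattain]
    ring
  have hloc : IsLocalMax gfun (x w) := by
    have hev : ∀ᶠ t in nhds (x w), 0 < t := eventually_gt_nhds (hxpos w)
    refine hev.mono fun t ht => ?_
    rw [hg0]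
    have hy0 : ∀ v, 0 ≤ Function.update x w t v := by
      intro v
      rcases eq_or_ne v w with h | h
      · rw [h, Function.update_self]; exact ht.le
      · rw [Function.update_of_ne h]; exact (hxpos v).le
    have hq := hub (Function.update x w t) hy0
    have h2 := hupdate t
    show A * t ^ k + B * t + C ≤ 0
    linarith
  have hderiv : HasDerivAt gfun (A * ((k : ℝ) * x w ^ (k - 1)) + B) (x w) := by
    have hd1 : HasDerivAt (fun t : ℝ => A * t ^ k) (A * ((k : ℝ) * x w ^ (k - 1))) (x w) :=
      (hasDerivAt_pow k (x w)).const_mul A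
    have hd2 : HasDerivAt (fun t : ℝ => B * t) B (x w) := by
      simpa using (hasDerivAt_id (x w)).const_mul B
    exact (hd1.add hd2).add_const C
  have hzero := hloc.hasDerivAt_eq_zero hderiv
  linear_combination hzero

end FinHypergraph

/-- if `G` maximizes the `α`-spectral radius among `k`-uniform
supertrees with degree sequence `π` and `x` is its `α`-Perron vector, then
`d_G(u) > d_G(v)` implies `x_u > x_v`. -/
theorem perron_strict_mono_of_degree (k : ℕ) (hk : 2 ≤ k)
    (α : ℝ) (hα0 : 0 ≤ α) (hα1 : α < 1) (π : Multiset ℕ)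
    {V : Type} [Fintype V] [DecidableEq V] (G : FinHypergraph V)
    (hG : G.IsSupertree k) (hπ : G.degreeMultiset = π)
    (hmax : ∀ (W : Type) [Fintype W] [DecidableEq W] (H : FinHypergraph W),
      H.IsSupertree k → H.degreeMultiset = π → H.aspec k α ≤ G.aspec k α)
    (x : V → ℝ) (hx : G.IsPerron k α x)
    (u v : V) (hd : G.degree v < G.degree u) :
    x v < x u := by
  classical
  obtain ⟨huni, hconn, hacyc⟩ := hG
  obtain ⟨hxpos, hxnorm, hxattain⟩ := hx
  by_contra hcon
  push_neg at hcon
  have huv : u ≠ v := fun h => by rw [h] at hd; omega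
  have hreach : ∀ a b : V, G.Reach a b := FinHypergraph.connected_iff_reach.1 hconn
  -- v has positive degree
  have hdv1 : 1 ≤ G.degree v := by
    obtain ⟨l, hw⟩ := hreach u v
    have hl1 : 1 ≤ l := by
      rcases Nat.eq_zero_or_pos l with h | h
      · exact absurd (FinHypergraph.nwalk_zero (h ▸ hw)) huv
      · exact h
    obtain ⟨vs, es, h0, hl, hstep⟩ := hw
    have hv : v ∈ es (l - 1) := by
      have := (hstep (l - 1) (by omega)).2.2
      rwa [show l - 1 + 1 = l by omega, hl] at this
    refine Finset.card_pos.2 ⟨es (l - 1), Finset.mem_filter.2 ⟨(hstep (l - 1) (by omega)).1, hv⟩⟩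
  -- minimal u-v walk
  obtain ⟨pvs, pes, hp0, hpl, hpstep⟩ := FinHypergraph.nwalk_hdist (hreach u v)
  obtain ⟨hpvinj, hpeinj⟩ := FinHypergraph.nwalk_data_inj hp0 hpl hpstep le_rfl
  have hL1 : 1 ≤ G.hdist u v := by
    rcases Nat.eq_zero_or_pos (G.hdist u v) with h | h
    · exact absurd (FinHypergraph.eq_of_hdist_eq_zero (hreach u v) h) huv
    · exact h
  have hf₀mem : pes 0 ∈ G.edges := (hpstep 0 (by omega)).1
  have huf₀ : u ∈ pes 0 := by
    have := (hpstep 0 (by omega)).2.1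
    rwa [hp0] at this
  -- the "bad" edges
  set Bad := G.edges.filter (fun e => u ∈ e ∧ (v ∈ e ∨ insert v (e.erase u) ∈ G.edges))
    with hBadDef
  -- two distinct edges share at most one vertex
  have hshare : ∀ e₁ ∈ G.edges, ∀ e₂ ∈ G.edges, e₁ ≠ e₂ → ∀ a b : V,
      a ∈ e₁ → b ∈ e₁ → a ∈ e₂ → b ∈ e₂ → a = b := by
    intro e₁ he₁ e₂ he₂ hne a b ha1 hb1 ha2 hb2
    by_contra hab
    exact hacyc (FinHypergraph.hasCycle_two he₁ he₂ hne hab ha1 hb1 ha2 hb2)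
  have hk1 : ∀ e ∈ G.edges, (e.erase u).Nonempty → True := fun _ _ _ => trivial
  -- erase u of an edge containing u is nonempty
  have herasene : ∀ e ∈ G.edges, u ∈ e → (e.erase u).Nonempty := by
    intro e he hu
    rw [← Finset.card_pos, Finset.card_erase_of_mem hu, huni e he]
    omega
  have hunotins : ∀ e : Finset V, u ∉ insert v (e.erase u) := by
    intro e h
    rcases Finset.mem_insert.1 h with h | h
    · exact huv h
    · exact (Finset.notMem_erase u e) h
  -- type-1 bad edges equal pes 0
  have htype1 : ∀ e ∈ G.edges, u ∈ e → v ∈ e → e = pes 0 := by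
    intro e he hue hve
    have hL : G.hdist u v = 1 :=
      le_antisymm (FinHypergraph.hdist_le (FinHypergraph.nwalk_single he hue hve)) hL1
    have hvf₀ : v ∈ pes 0 := by
      have := (hpstep 0 (by omega)).2.2
      rwa [show (0:ℕ) + 1 = G.hdist u v by omega, hpl] at this
    by_contra hne
    exact hacyc (FinHypergraph.hasCycle_two he hf₀mem hne huv hue hve huf₀ hvf₀)
  -- at most one bad edge
  have hbadcard : Bad.card ≤ 1 := by
    by_contra h
    obtain ⟨e₁, he₁, e₂, he₂, hne⟩ := Finset.one_lt_card.1 (Nat.lt_of_not_le h)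
    obtain ⟨he₁e, hu₁, hcase₁⟩ := Finset.mem_filter.1 he₁
    obtain ⟨he₂e, hu₂, hcase₂⟩ := Finset.mem_filter.1 he₂
    by_cases hv1 : v ∈ e₁ <;> by_cases hv2 : v ∈ e₂
    · exact hacyc (FinHypergraph.hasCycle_two he₁e he₂e hne huv hu₁ hv1 hu₂ hv2)
    · have hf₂ : insert v (e₂.erase u) ∈ G.edges := (hcase₂.resolve_left hv2)
      obtain ⟨b, hb⟩ := herasene e₂ he₂e hu₂
      have hbu : b ≠ u := Finset.ne_of_mem_erase hb
      have hbe₂ : b ∈ e₂ := Finset.mem_of_mem_erase hb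
      have hbv : b ≠ v := fun h => hv2 (h ▸ hbe₂)
      refine hacyc (FinHypergraph.hasCycle_three he₁e hf₂ he₂e ?_ hne ?_ huv
        (Ne.symm hbu) (Ne.symm hbv) ?_ ?_ ?_ ?_ ?_ ?_)
      · exact fun h => hunotins e₂ (h ▸ hu₁)
      · exact fun h => hunotins e₂ (h.symm ▸ hu₂)
      · exact hu₁
      · exact hv1
      · exact Finset.mem_insert_self v _
      · exact Finset.mem_insert_of_mem hb
      · exact hbe₂
      · exact hu₂
    · have hf₁ : insert v (e₁.erase u) ∈ G.edges := (hcase₁.resolve_left hv1)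
      obtain ⟨b, hb⟩ := herasene e₁ he₁e hu₁
      have hbu : b ≠ u := Finset.ne_of_mem_erase hb
      have hbe₁ : b ∈ e₁ := Finset.mem_of_mem_erase hb
      have hbv : b ≠ v := fun h => hv1 (h ▸ hbe₁)
      refine hacyc (FinHypergraph.hasCycle_three he₂e hf₁ he₁e ?_ hne.symm ?_ huv
        (Ne.symm hbu) (Ne.symm hbv) ?_ ?_ ?_ ?_ ?_ ?_)
      · exact fun h => hunotins e₁ (h ▸ hu₂)
      · exact fun h => hunotins e₁ (h.symm ▸ hu₁)
      · exact hu₂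
      · exact hv2
      · exact Finset.mem_insert_self v _
      · exact Finset.mem_insert_of_mem hb
      · exact hbe₁
      · exact hu₁
    · have hf₁ : insert v (e₁.erase u) ∈ G.edges := (hcase₁.resolve_left hv1)
      have hf₂ : insert v (e₂.erase u) ∈ G.edges := (hcase₂.resolve_left hv2)
      obtain ⟨a, ha⟩ := herasene e₁ he₁e hu₁
      have hau : a ≠ u := Finset.ne_of_mem_erase ha
      have hae₁ : a ∈ e₁ := Finset.mem_of_mem_erase ha
      by_cases hae₂ : a ∈ e₂
      · exact hacyc (FinHypergraph.hasCycle_two he₁e he₂e hne (Ne.symm hau) hu₁ hae₁ hu₂ hae₂)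
      · obtain ⟨b, hb⟩ := herasene e₂ he₂e hu₂
        have hbu : b ≠ u := Finset.ne_of_mem_erase hb
        have hbe₂ : b ∈ e₂ := Finset.mem_of_mem_erase hb
        have hab : a ≠ b := fun h => hae₂ (h ▸ hbe₂)
        have hav : a ≠ v := fun h => hv1 (h ▸ hae₁)
        have hbv : b ≠ v := fun h => hv2 (h ▸ hbe₂)
        have hff : insert v (e₁.erase u) ≠ insert v (e₂.erase u) := by
          intro h
          have h1 : e₁.erase u = e₂.erase u := by
            have e1 : (insert v (e₁.erase u)).erase v = e₁.erase u :=
              Finset.erase_insert (fun hh => hv1 (Finset.mem_of_mem_erase hh))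
            have e2 : (insert v (e₂.erase u)).erase v = e₂.erase u :=
              Finset.erase_insert (fun hh => hv2 (Finset.mem_of_mem_erase hh))
            rw [← e1, ← e2, h]
          have h2 := congrArg (insert u) h1
          rw [Finset.insert_erase hu₁, Finset.insert_erase hu₂] at h2
          exact hne h2
        refine hacyc (FinHypergraph.hasCycle_four he₁e hf₁ hf₂ he₂e ?_ ?_ hne hff ?_ ?_
          (Ne.symm hau) huv (Ne.symm hbu) hav hab (Ne.symm hbv) ?_ ?_ ?_ ?_ ?_ ?_ ?_ ?_)
        · exact fun h => hunotins e₁ (h ▸ hu₁)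
        · exact fun h => hunotins e₂ (h ▸ hu₁)
        · exact fun h => hunotins e₁ (h.symm ▸ hu₂)
        · exact fun h => hunotins e₂ (h.symm ▸ hu₂)
        · exact hu₁
        · exact hae₁
        · exact Finset.mem_insert_of_mem ha
        · exact Finset.mem_insert_self v _
        · exact Finset.mem_insert_self v _
        · exact Finset.mem_insert_of_mem hb
        · exact hbe₂
        · exact hu₂
  have hbadf : ∀ e ∈ Bad, e ≠ pes 0 → 2 ≤ G.degree v := by
    intro est hest hnef
    obtain ⟨heste, hust, hcasest⟩ := Finset.mem_filter.1 hest
    by_cases hvst : v ∈ est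
    · exact absurd (htype1 est heste hust hvst) hnef
    · have hfs : insert v (est.erase u) ∈ G.edges := hcasest.resolve_left hvst
      by_contra hdeg
      push_neg at hdeg
      have hvone : ∀ g ∈ G.edges, v ∈ g → g = insert v (est.erase u) := by
        intro g hg hvg
        by_contra hne
        have : 1 < (G.edges.filter (fun e => v ∈ e)).card :=
          Finset.one_lt_card.2 ⟨g, Finset.mem_filter.2 ⟨hg, hvg⟩,
            insert v (est.erase u), Finset.mem_filter.2 ⟨hfs, Finset.mem_insert_self v _⟩, hne⟩
        have : 1 < G.degree v := this
        omega
      obtain ⟨a₀, ha₀⟩ := herasene est heste hust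
      have ha₀u : a₀ ≠ u := Finset.ne_of_mem_erase ha₀
      have ha₀est : a₀ ∈ est := Finset.mem_of_mem_erase ha₀
      have hL2 : G.hdist u v ≤ 2 := by
        refine FinHypergraph.hdist_le (FinHypergraph.nwalk_concat (l₁ := 1) (l₂ := 1)
          (FinHypergraph.nwalk_single heste hust ha₀est)
          (FinHypergraph.nwalk_single hfs (Finset.mem_insert_of_mem ha₀)
            (Finset.mem_insert_self v _)))
      rcases Nat.lt_or_ge (G.hdist u v) 2 with hL | hL
      · -- hdist = 1
        have hLeq : G.hdist u v = 1 := by omega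
        have hvf₀ : v ∈ pes 0 := by
          have := (hpstep 0 (by omega)).2.2
          rwa [show (0:ℕ) + 1 = G.hdist u v by omega, hpl] at this
        have := hvone (pes 0) hf₀mem hvf₀
        exact hunotins est (this ▸ huf₀)
      · have hLeq : G.hdist u v = 2 := by omega
        have hpes1 : pes 1 ∈ G.edges := (hpstep 1 (by omega)).1
        have hvpes1 : v ∈ pes 1 := by
          have := (hpstep 1 (by omega)).2.2
          rwa [show (1:ℕ) + 1 = G.hdist u v by omega, hpl] at this
        have hpes1fs : pes 1 = insert v (est.erase u) := hvone (pes 1) hpes1 hvpes1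
        have hw₁f₀ : pvs 1 ∈ pes 0 := (hpstep 0 (by omega)).2.2
        have hw₁fs : pvs 1 ∈ insert v (est.erase u) := hpes1fs ▸ (hpstep 1 (by omega)).2.1
        have huw₁ : u ≠ pvs 1 := fun h => hunotins est (h ▸ hw₁fs)
        by_cases haw : a₀ = pvs 1
        · -- 2-cycle with est and pes 0
          have hw₁est : pvs 1 ∈ est := haw ▸ ha₀est
          exact hacyc (FinHypergraph.hasCycle_two heste hf₀mem hnef huw₁ hust hw₁est huf₀ hw₁f₀)
        · -- 3-cycle u, pvs 1, a₀ with pes 0, fs, est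
          refine hacyc (FinHypergraph.hasCycle_three hf₀mem hfs heste ?_ hnef.symm ?_ huw₁
            (Ne.symm ha₀u) (fun h => haw h.symm) huf₀ hw₁f₀ hw₁fs
            (Finset.mem_insert_of_mem ha₀) ha₀est hust)
          · exact fun h => hunotins est (h ▸ huf₀)
          · exact fun h => hunotins est (h.symm ▸ hust)
  -- choose the edges to move from u to v
  set m := G.degree u - G.degree v with hmdef
  have hm1 : 1 ≤ m := by omega
  have hinscard : (insert (pes 0) Bad).card ≤ G.degree v := by
    by_cases hB : Bad ⊆ {pes 0}
    · have hsub : insert (pes 0) Bad ⊆ {pes 0} := by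
        intro g hg
        rcases Finset.mem_insert.1 hg with h | h
        · rw [h]; exact Finset.mem_singleton_self _
        · exact hB h
      have := Finset.card_le_card hsub
      simp only [Finset.card_singleton] at this
      omega
    · obtain ⟨est, hin, hne⟩ := Finset.not_subset.1 hB
      have h2 := hbadf est hin (fun h => hne (h ▸ Finset.mem_singleton_self _))
      have h3 := Finset.card_insert_le (pes 0) Bad
      omega
  have hAvail : m ≤ ((G.edges.filter (fun e => u ∈ e)) \ (insert (pes 0) Bad)).card := by
    have h1 : (G.edges.filter (fun e => u ∈ e)).card = G.degree u := rfl
    have h2 := Finset.le_card_sdiff (insert (pes 0) Bad) (G.edges.filter (fun e => u ∈ e))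
    omega
  obtain ⟨E', hE'sub, hE'card⟩ := Finset.exists_subset_card_eq hAvail
  have hE'props : ∀ e ∈ E', e ∈ G.edges ∧ u ∈ e ∧ v ∉ e ∧
      insert v (e.erase u) ∉ G.edges ∧ e ≠ pes 0 := by
    intro e he
    obtain ⟨h2, h3⟩ := Finset.mem_sdiff.1 (hE'sub he)
    obtain ⟨h4, h5⟩ := Finset.mem_filter.1 h2
    have h6 : e ∉ Bad := fun h => h3 (Finset.mem_insert_of_mem h)
    have h7 : e ≠ pes 0 := fun h => h3 (by rw [h]; exact Finset.mem_insert_self _ _)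
    have h8 : ¬ (u ∈ e ∧ (v ∈ e ∨ insert v (e.erase u) ∈ G.edges)) := fun hc =>
      h6 (Finset.mem_filter.2 ⟨h4, hc⟩)
    push_neg at h8
    obtain ⟨hn1, hn2⟩ := h8 h5
    exact ⟨h4, h5, hn1, hn2, h7⟩
  -- the switched hypergraph
  set φ : Finset V → Finset V := fun e => insert v (e.erase u) with hφ
  set G' : FinHypergraph V := ⟨(G.edges \ E') ∪ E'.image φ⟩ with hG'def
  have hG'edges : G'.edges = (G.edges \ E') ∪ E'.image φ := rfl
  have hvinφ : ∀ e, v ∈ φ e := fun e => Finset.mem_insert_self v _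
  have hunotφ : ∀ e, u ∉ φ e := hunotins
  have hwinφ : ∀ (w : V), w ≠ u → w ≠ v → ∀ e, (w ∈ φ e ↔ w ∈ e) := by
    intro w hwu hwv e
    rw [hφ]
    simp only [Finset.mem_insert, Finset.mem_erase]
    constructor
    · rintro (h | h)
      · exact absurd h hwv
      · exact h.2
    · intro h
      exact Or.inr ⟨hwu, h⟩
  have hφcard : ∀ e ∈ E', (φ e).card = k := by
    intro e he
    obtain ⟨h1, h2, h3, -, -⟩ := hE'props e he
    rw [hφ]
    simp only []
    rw [Finset.card_insert_of_notMem (fun h => h3 (Finset.mem_of_mem_erase h)),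
      Finset.card_erase_of_mem h2, huni e h1]
    omega
  have hφinj : Set.InjOn φ ↑E' := by
    intro e₁ h₁ e₂ h₂ hfe
    obtain ⟨-, hu₁, hv₁, -, -⟩ := hE'props e₁ h₁
    obtain ⟨-, hu₂, hv₂, -, -⟩ := hE'props e₂ h₂
    have h1 : e₁.erase u = e₂.erase u := by
      have e1 : (φ e₁).erase v = e₁.erase u :=
        Finset.erase_insert (fun hh => hv₁ (Finset.mem_of_mem_erase hh))
      have e2 : (φ e₂).erase v = e₂.erase u :=
        Finset.erase_insert (fun hh => hv₂ (Finset.mem_of_mem_erase hh))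
      rw [← e1, ← e2, hfe]
    have h2 := congrArg (insert u) h1
    rwa [Finset.insert_erase hu₁, Finset.insert_erase hu₂] at h2
  have hφnotmem : ∀ e ∈ E', φ e ∉ G.edges := fun e he => (hE'props e he).2.2.2.1
  have hdisj : Disjoint (G.edges \ E') (E'.image φ) := by
    rw [Finset.disjoint_right]
    intro g hg
    obtain ⟨e, he, rfl⟩ := Finset.mem_image.1 hg
    intro hmem
    exact hφnotmem e he (Finset.mem_sdiff.1 hmem).1
  have hE'subE : E' ⊆ G.edges := fun e he => (hE'props e he).1
  have hE'le : E'.card ≤ G.edges.card := Finset.card_le_card hE'subE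
  have hcardG' : G'.edges.card = G.edges.card := by
    rw [hG'edges, Finset.card_union_of_disjoint hdisj, Finset.card_sdiff_of_subset hE'subE,
      Finset.card_image_of_injOn hφinj, hE'card]
    omega
  -- degrees of G'
  have hdegu : G'.degree u = G.degree u - m := by
    have h1 : G'.edges.filter (fun e => u ∈ e) = (G.edges.filter (fun e => u ∈ e)) \ E' := by
      ext g
      simp only [hG'edges, Finset.mem_filter, Finset.mem_union, Finset.mem_sdiff,
        Finset.mem_image]
      constructor
      · rintro ⟨hg | ⟨e, he, rfl⟩, hu⟩
        · exact ⟨⟨hg.1, hu⟩, hg.2⟩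
        · exact absurd hu (hunotφ e)
      · rintro ⟨⟨hg, hu⟩, hne⟩
        exact ⟨Or.inl ⟨hg, hne⟩, hu⟩
    show (G'.edges.filter (fun e => u ∈ e)).card = _
    rw [h1, Finset.card_sdiff_of_subset (fun e he => Finset.mem_filter.2
      ⟨hE'subE he, (hE'props e he).2.1⟩), hE'card]
    rfl
  have hdegv : G'.degree v = G.degree v + m := by
    have h1 : G'.edges.filter (fun e => v ∈ e) =
        (G.edges.filter (fun e => v ∈ e)) ∪ E'.image φ := by
      ext g
      simp only [hG'edges, Finset.mem_filter, Finset.mem_union, Finset.mem_sdiff,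
        Finset.mem_image]
      constructor
      · rintro ⟨hg | ⟨e, he, rfl⟩, hv⟩
        · exact Or.inl ⟨hg.1, hv⟩
        · exact Or.inr ⟨e, he, rfl⟩
      · rintro (⟨hg, hv⟩ | ⟨e, he, rfl⟩)
        · refine ⟨Or.inl ⟨hg, fun hE => ?_⟩, hv⟩
          exact (hE'props g hE).2.2.1 hv
        · exact ⟨Or.inr ⟨e, he, rfl⟩, hvinφ e⟩
    have h2 : Disjoint (G.edges.filter (fun e => v ∈ e)) (E'.image φ) := by
      rw [Finset.disjoint_right]
      intro g hg
      obtain ⟨e, he, rfl⟩ := Finset.mem_image.1 hg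
      intro hmem
      exact hφnotmem e he (Finset.mem_filter.1 hmem).1
    show (G'.edges.filter (fun e => v ∈ e)).card = _
    rw [h1, Finset.card_union_of_disjoint h2, Finset.card_image_of_injOn hφinj, hE'card]
    rfl
  have hdegw : ∀ w : V, w ≠ u → w ≠ v → G'.degree w = G.degree w := by
    intro w hwu hwv
    have h1 : G'.edges.filter (fun e => w ∈ e) =
        ((G.edges.filter (fun e => w ∈ e)) \ (E'.filter (fun e => w ∈ e))) ∪
          ((E'.filter (fun e => w ∈ e)).image φ) := by
      ext g
      simp only [hG'edges, Finset.mem_filter, Finset.mem_union, Finset.mem_sdiff,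
        Finset.mem_image]
      constructor
      · rintro ⟨hg | ⟨e, he, rfl⟩, hw⟩
        · exact Or.inl ⟨⟨hg.1, hw⟩, fun hc => hg.2 hc.1⟩
        · exact Or.inr ⟨e, ⟨he, (hwinφ w hwu hwv e).1 hw⟩, rfl⟩
      · rintro (⟨⟨hg, hw⟩, hne⟩ | ⟨e, ⟨he, hwe⟩, rfl⟩)
        · refine ⟨Or.inl ⟨hg, fun hE => hne ⟨hE, hw⟩⟩, hw⟩
        · exact ⟨Or.inr ⟨e, he, rfl⟩, (hwinφ w hwu hwv e).2 hwe⟩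
    have h2 : Disjoint ((G.edges.filter (fun e => w ∈ e)) \ (E'.filter (fun e => w ∈ e)))
        ((E'.filter (fun e => w ∈ e)).image φ) := by
      rw [Finset.disjoint_right]
      intro g hg
      obtain ⟨e, he, rfl⟩ := Finset.mem_image.1 hg
      intro hmem
      exact hφnotmem e (Finset.mem_filter.1 he).1
        (Finset.mem_filter.1 (Finset.mem_sdiff.1 hmem).1).1
    have h3 : E'.filter (fun e => w ∈ e) ⊆ G.edges.filter (fun e => w ∈ e) := by
      intro g hg
      obtain ⟨hgE, hgw⟩ := Finset.mem_filter.1 hg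
      exact Finset.mem_filter.2 ⟨hE'subE hgE, hgw⟩
    have h4 := Finset.card_le_card h3
    show (G'.edges.filter (fun e => w ∈ e)).card = _
    rw [h1, Finset.card_union_of_disjoint h2, Finset.card_sdiff_of_subset h3,
      Finset.card_image_of_injOn (hφinj.mono (by
        intro g hg
        exact (Finset.mem_filter.1 hg).1))]
    show _ = (G.edges.filter (fun e => w ∈ e)).card
    omega
  -- degree sequence preserved
  have hdegswap : ∀ w : V, G'.degree w = G.degree (Equiv.swap u v w) := by
    intro w
    rcases eq_or_ne w u with h | h
    · rw [h, Equiv.swap_apply_left, hdegu]; omega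
    · rcases eq_or_ne w v with h2 | h2
      · rw [h2, Equiv.swap_apply_right, hdegv]; omega
      · rw [Equiv.swap_apply_of_ne_of_ne h h2, hdegw w h h2]
  have hπ' : G'.degreeMultiset = π := by
    rw [← hπ]
    show Finset.univ.val.map G'.degree = Finset.univ.val.map G.degree
    have h1 : Finset.univ.val.map G'.degree =
        Finset.univ.val.map (fun w => G.degree (Equiv.swap u v w)) :=
      Multiset.map_congr rfl (fun w _ => hdegswap w)
    have h2 : Finset.univ.val.map (fun w => G.degree (Equiv.swap u v w)) =
        (Finset.univ.val.map (Equiv.swap u v)).map G.degree := by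
      rw [Multiset.map_map]
      rfl
    have h3 : (Finset.univ.map (Equiv.swap u v).toEmbedding) = Finset.univ :=
      Finset.map_univ_equiv _
    have h4 : Finset.univ.val.map ⇑(Equiv.swap u v) = Finset.univ.val := by
      calc Finset.univ.val.map ⇑(Equiv.swap u v)
          = (Finset.univ.map (Equiv.swap u v).toEmbedding).val := rfl
      _ = Finset.univ.val := by rw [h3]
    rw [h1, h2, h4]
  -- connectivity of G'
  have hstepG' : ∀ e ∈ G.edges, e ∉ E' → e ∈ G'.edges := by
    intro e he hne
    rw [hG'edges]
    exact Finset.mem_union_left _ (Finset.mem_sdiff.2 ⟨he, hne⟩)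
  have himgG' : ∀ e ∈ E', φ e ∈ G'.edges := by
    intro e he
    rw [hG'edges]
    exact Finset.mem_union_right _ (Finset.mem_image_of_mem φ he)
  have hmemφ : ∀ (e : Finset V) (w : V), w ∈ e → w ≠ u → w ∈ φ e := by
    intro e w hw hwu
    by_cases hwv : w = v
    · rw [hwv]; exact hvinφ _
    · exact (hwinφ w hwu hwv e).2 hw
  have hreachuv : G'.Reach u v := by
    have hstep2 : ∀ i < G.hdist u v, G'.Reach (pvs i) (pvs (i + 1)) := by
      intro i hi
      obtain ⟨he, ha, hb⟩ := hpstep i hi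
      by_cases hE : pes i ∈ E'
      · have hne0 : i ≠ 0 := by
          intro h
          exact (hE'props _ hE).2.2.2.2 (by rw [h])
        have hau : pvs i ≠ u := by
          intro h
          have := hpvinj i (by omega) 0 (by omega) (by rw [h, hp0])
          omega
        have hbu : pvs (i + 1) ≠ u := by
          intro h
          have := hpvinj (i + 1) (by omega) 0 (by omega) (by rw [h, hp0])
          omega
        exact FinHypergraph.reach_step (himgG' _ hE) (hmemφ _ _ ha hau) (hmemφ _ _ hb hbu)
      · exact FinHypergraph.reach_step (hstepG' _ he hE) ha hb
    have hchain : ∀ i, i ≤ G.hdist u v → G'.Reach u (pvs i) := by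
      intro i
      induction i with
      | zero =>
        intro _
        rw [hp0]
        exact FinHypergraph.reach_refl G' u
      | succ n ih =>
        intro h
        exact FinHypergraph.reach_trans (ih (by omega)) (hstep2 n (by omega))
    have := hchain (G.hdist u v) le_rfl
    rwa [hpl] at this
  have hstep3 : ∀ (a b : V) (e : Finset V), e ∈ G.edges → a ∈ e → b ∈ e → G'.Reach a b := by
    intro a b e he ha hb
    by_cases hE : e ∈ E'
    · by_cases hau : a = u <;> by_cases hbu : b = u
      · rw [hau, hbu]
        exact FinHypergraph.reach_refl G' u
      · rw [hau]
        exact FinHypergraph.reach_trans hreachuv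
          (FinHypergraph.reach_step (himgG' e hE) (hvinφ e) (hmemφ e b hb hbu))
      · rw [hbu]
        exact FinHypergraph.reach_symm (FinHypergraph.reach_trans hreachuv
          (FinHypergraph.reach_step (himgG' e hE) (hvinφ e) (hmemφ e a ha hau)))
      · exact FinHypergraph.reach_step (himgG' e hE) (hmemφ e a ha hau) (hmemφ e b hb hbu)
    · exact FinHypergraph.reach_step (hstepG' e he hE) ha hb
  have hreach' : ∀ a b : V, G'.Reach a b := by
    have key : ∀ (l : ℕ) (a b : V), G.NWalk a b l → G'.Reach a b := by
      intro l
      induction l with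
      | zero =>
        intro a b hw
        rw [FinHypergraph.nwalk_zero hw]
        exact FinHypergraph.reach_refl G' b
      | succ n ih =>
        intro a b hw
        obtain ⟨vs, es, h0, hl, hstep⟩ := hw
        have h1 : G'.Reach a (vs 1) := by
          refine hstep3 a (vs 1) (es 0) (hstep 0 (by omega)).1 ?_ (hstep 0 (by omega)).2.2
          rw [← h0]
          exact (hstep 0 (by omega)).2.1
        have h2 : G.NWalk (vs 1) b n :=
          ⟨fun j => vs (j + 1), fun j => es (j + 1), rfl, hl, fun i hi => hstep (i + 1) (by omega)⟩
        exact FinHypergraph.reach_trans h1 (ih (vs 1) b h2)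
    intro a b
    obtain ⟨l, hw⟩ := hreach a b
    exact key l a b hw
  -- G' is a supertree with the same degree sequence
  have huni' : G'.Uniform k := by
    intro e he
    rw [hG'edges] at he
    rcases Finset.mem_union.1 he with h | h
    · exact huni e (Finset.mem_sdiff.1 h).1
    · obtain ⟨f, hf, rfl⟩ := Finset.mem_image.1 h
      exact hφcard f hf
  have hconn' : G'.Connected := FinHypergraph.connected_iff_reach.2 hreach'
  have hacyc' : ¬ G'.HasCycle := by
    refine FinHypergraph.acyclic_of_count hk hreach' huni' u ?_
    rw [hcardG']
    exact FinHypergraph.count_of_tree hreach hacyc huni u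
  have hsup' : G'.IsSupertree k := ⟨huni', hconn', hacyc'⟩
  -- analysis
  have hα1' : α ≤ 1 := hα1.le
  have hk1 : 1 ≤ k := by omega
  have hxnn : ∀ w, 0 ≤ x w := fun w => (hxpos w).le
  set ρ := G.aspec k α with hρdef
  have hattainG : G.qform k α x = ρ := hxattain
  have hρ0 : 0 ≤ ρ := by
    rw [← hattainG]
    exact FinHypergraph.qform_nonneg hα0 hα1' hxnn
  have hqG : (∑ e ∈ G.edges \ E', (α * ∑ z ∈ e, x z ^ k + (1 - α) * (k:ℝ) * ∏ z ∈ e, x z)) +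
      ∑ e ∈ E', (α * ∑ z ∈ e, x z ^ k + (1 - α) * (k:ℝ) * ∏ z ∈ e, x z) =
      G.qform k α x := Finset.sum_sdiff hE'subE
  have hqG' : G'.qform k α x =
      (∑ e ∈ G.edges \ E', (α * ∑ z ∈ e, x z ^ k + (1 - α) * (k:ℝ) * ∏ z ∈ e, x z)) +
      ∑ e ∈ E', (α * ∑ z ∈ φ e, x z ^ k + (1 - α) * (k:ℝ) * ∏ z ∈ φ e, x z) := by
    show (∑ e ∈ G'.edges, (α * ∑ z ∈ e, x z ^ k + (1 - α) * (k:ℝ) * ∏ z ∈ e, x z)) = _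
    rw [hG'edges, Finset.sum_union hdisj,
      Finset.sum_image (fun e he f hf h => hφinj he hf h)]
  have hterms : ∀ e ∈ E',
      (α * ∑ z ∈ e, x z ^ k + (1 - α) * (k:ℝ) * ∏ z ∈ e, x z) ≤
      (α * ∑ z ∈ φ e, x z ^ k + (1 - α) * (k:ℝ) * ∏ z ∈ φ e, x z) := by
    intro e he
    obtain ⟨heE, hue, hve, -, -⟩ := hE'props e he
    have hvnotin : v ∉ e.erase u := fun h => hve (Finset.mem_of_mem_erase h)
    have hsum_e : ∑ z ∈ e, x z ^ k = x u ^ k + ∑ z ∈ e.erase u, x z ^ k :=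
      (Finset.add_sum_erase e _ hue).symm
    have hprod_e : ∏ z ∈ e, x z = x u * ∏ z ∈ e.erase u, x z :=
      (Finset.mul_prod_erase e _ hue).symm
    have hsum_f : ∑ z ∈ φ e, x z ^ k = x v ^ k + ∑ z ∈ e.erase u, x z ^ k := by
      rw [hφ]
      simp only []
      rw [Finset.sum_insert hvnotin]
    have hprod_f : ∏ z ∈ φ e, x z = x v * ∏ z ∈ e.erase u, x z := by
      rw [hφ]
      simp only []
      rw [Finset.prod_insert hvnotin]
    rw [hsum_e, hprod_e, hsum_f, hprod_f]
    have hp1 : x u ^ k ≤ x v ^ k := pow_le_pow_left₀ (hxnn u) hcon k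
    have hppos : (0:ℝ) ≤ ∏ z ∈ e.erase u, x z := Finset.prod_nonneg (fun z _ => hxnn z)
    have hmul : x u * ∏ z ∈ e.erase u, x z ≤ x v * ∏ z ∈ e.erase u, x z :=
      mul_le_mul_of_nonneg_right hcon hppos
    have hc : (0:ℝ) ≤ (1 - α) * (k:ℝ) := mul_nonneg (by linarith) (Nat.cast_nonneg k)
    have h1 := mul_le_mul_of_nonneg_left hp1 hα0
    have h2 := mul_le_mul_of_nonneg_left hmul hc
    linarith
  have hqle : G.qform k α x ≤ G'.qform k α x := by
    have := Finset.sum_le_sum hterms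
    rw [hqG']
    linarith
  have haspec' : G'.aspec k α ≤ ρ := hmax V G' hsup' hπ'
  have hq'le : G'.qform k α x ≤ G'.aspec k α :=
    FinHypergraph.qform_le_aspec hk1 hα0 hα1' hxnn hxnorm
  have hattainG' : G'.qform k α x = ρ :=
    le_antisymm (le_trans hq'le haspec') (by rw [← hattainG]; exact hqle)
  -- eigenvalue equations at u
  have hubG : ∀ y : V → ℝ, (∀ w, 0 ≤ y w) → G.qform k α y ≤ ρ * ∑ w, y w ^ k :=
    FinHypergraph.qform_le_mul hk1 huni hρ0
      (fun y hy0 hy1 => FinHypergraph.qform_le_aspec hk1 hα0 hα1' hy0 hy1) 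
  have hubG' : ∀ y : V → ℝ, (∀ w, 0 ≤ y w) → G'.qform k α y ≤ ρ * ∑ w, y w ^ k :=
    FinHypergraph.qform_le_mul hk1 huni' hρ0
      (fun y hy0 hy1 => le_trans (FinHypergraph.qform_le_aspec hk1 hα0 hα1' hy0 hy1) haspec')
  have heigG := FinHypergraph.eigen_eq hk hxpos hubG (by rw [hattainG, hxnorm, mul_one]) u
  have heigG' := FinHypergraph.eigen_eq hk hxpos hubG' (by rw [hattainG', hxnorm, mul_one]) u
  -- rewrite the G' equation
  have hfilter' : G'.edges.filter (fun e => u ∈ e) = (G.edges.filter (fun e => u ∈ e)) \ E' := by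
    ext g
    simp only [hG'edges, Finset.mem_filter, Finset.mem_union, Finset.mem_sdiff,
      Finset.mem_image]
    constructor
    · rintro ⟨hg | ⟨e, he, rfl⟩, hu⟩
      · exact ⟨⟨hg.1, hu⟩, hg.2⟩
      · exact absurd hu (hunotφ e)
    · rintro ⟨⟨hg, hu⟩, hne⟩
      exact ⟨Or.inl ⟨hg, hne⟩, hu⟩
  have hsubfilter : E' ⊆ G.edges.filter (fun e => u ∈ e) := fun e he =>
    Finset.mem_filter.2 ⟨hE'subE he, (hE'props e he).2.1⟩
  have hS' : ∑ e ∈ G'.edges.filter (fun e => u ∈ e), ∏ z ∈ e.erase u, x z =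
      (∑ e ∈ G.edges.filter (fun e => u ∈ e), ∏ z ∈ e.erase u, x z) -
      ∑ e ∈ E', ∏ z ∈ e.erase u, x z := by
    rw [hfilter', Finset.sum_sdiff_eq_sub hsubfilter]
  have hT : (0:ℝ) < ∑ e ∈ E', ∏ z ∈ e.erase u, x z := by
    refine Finset.sum_pos (fun e he => Finset.prod_pos (fun z _ => hxpos z)) ?_
    rw [← Finset.card_pos, hE'card]
    omega
  have hX : (0:ℝ) < x u ^ (k - 1) := pow_pos (hxpos u) _
  have hdeq : G'.degree u = G.degree v := by omega
  have hcast : ((G'.degree u : ℕ) : ℝ) = ((G.degree v : ℕ) : ℝ) := by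
    exact_mod_cast congrArg (fun n : ℕ => (n : ℝ)) hdeq
  rw [hcast, hS'] at heigG'
  have hkpos : (0:ℝ) < (k : ℝ) := by
    have : (0:ℕ) < k := by omega
    exact_mod_cast this
  have hddle : ((G.degree v : ℕ) : ℝ) ≤ ((G.degree u : ℕ) : ℝ) := by
    exact_mod_cast hd.le
  have hsum0 : (k:ℝ) * α * (((G.degree u : ℕ) : ℝ) - ((G.degree v : ℕ) : ℝ)) * x u ^ (k - 1) +
      (1 - α) * (k:ℝ) * (∑ e ∈ E', ∏ z ∈ e.erase u, x z) = 0 := by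
    linear_combination heigG - heigG'
  have hpos1 : (0:ℝ) ≤ (k:ℝ) * α * (((G.degree u : ℕ) : ℝ) - ((G.degree v : ℕ) : ℝ)) *
      x u ^ (k - 1) :=
    mul_nonneg (mul_nonneg (mul_nonneg hkpos.le hα0) (by linarith)) hX.le
  have hpos2 : (0:ℝ) < (1 - α) * (k:ℝ) * (∑ e ∈ E', ∏ z ∈ e.erase u, x z) :=
    mul_pos (mul_pos (by linarith) hkpos) hT
  linarith
end
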